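/- arXiv:1604.05678 — 7 statements merged into one kernel-verified Lean document; each statement's English description precedes it below -/
import Mathlib

section
/- Let L be an infinite-dimensional Lie algebra over a field F generated by finitely many elements a_1, …, a_m such that every element of the Lie set generated by {a_1, …, a_m} is ad-nilpotent. Then L has a just infinite homomorphic image: there exists a Lie ideal J of L such that the quotient L/J is infinite-dimensional over F and every nonzero Lie ideal of L/J has finite codimension in L/J. -/
/-- The Lie set generated by a subset `X` of a Lie ring: the smallest subset of `L`
containing `X` and closed under the Lie bracket. -/
inductive LieSetClosure {L : Type*} [LieRing L] (X : Set L) : L → Prop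
  | base {x : L} : x ∈ X → LieSetClosure X x
  | bracket {x y : L} : LieSetClosure X x → LieSetClosure X y → LieSetClosure X ⁅x, y⁆

section Aux

variable {F : Type*} {L : Type*} [Field F] [LieRing L] [LieAlgebra F L]

/-- Finite codimension is inherited by larger ideals. -/
lemma findim_quot_of_le {I I' : LieIdeal F L} (h : I ≤ I')
    (hI : FiniteDimensional F (L ⧸ I)) : FiniteDimensional F (L ⧸ I') := by
  have hsub : I.toSubmodule ≤ (I'.toSubmodule).comap (LinearMap.id (R := F) (M := L)) := h
  have hsurj : Function.Surjective
      (Submodule.mapQ I.toSubmodule I'.toSubmodule LinearMap.id hsub) := by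
    intro x
    obtain ⟨y, rfl⟩ := Submodule.Quotient.mk_surjective I'.toSubmodule x
    exact ⟨Submodule.Quotient.mk y, by simp [Submodule.mapQ_apply]⟩
  exact Module.Finite.of_surjective _ hsurj

/-- In a finitely generated Lie algebra, every ideal of finite codimension contains a
finitely generated ideal of finite codimension. -/
lemma exists_fg_ideal_le {m : ℕ} (a : Fin m → L)
    (hgen : LieSubalgebra.lieSpan F L (Set.range a) = ⊤)
    (I : LieIdeal F L) (hI : FiniteDimensional F (L ⧸ I)) :
    ∃ S : Set L, S.Finite ∧ S ⊆ I ∧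
      FiniteDimensional F (L ⧸ (LieSubmodule.lieSpan F L S : LieIdeal F L)) := by
  classical
  -- choose a finite set of elements of `L` whose classes span `L ⧸ I`
  obtain ⟨d, s, hs⟩ := Module.Finite.exists_fin (R := F) (M := L ⧸ I)
  choose x hx using fun i => Submodule.Quotient.mk_surjective I.toSubmodule (s i)
  set V : Submodule F L := Submodule.span F (Set.range x) with hV
  have hsup : V ⊔ I.toSubmodule = ⊤ := by
    rw [eq_top_iff]
    intro y _
    have h1 : (Submodule.Quotient.mk y : L ⧸ I.toSubmodule) ∈
        Submodule.span F
          (Set.range fun i => (Submodule.Quotient.mk (x i) : L ⧸ I.toSubmodule)) := by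
      have h2 : (Set.range fun i => (Submodule.Quotient.mk (x i) : L ⧸ I.toSubmodule))
          = Set.range s := by
        ext z; simp only [Set.mem_range]; exact exists_congr fun i => by rw [hx i]
      rw [h2]
      have h4 : (Submodule.span F (Set.range s) : Set (L ⧸ I.toSubmodule)) = Set.univ := by
        rw [hs]; rfl
      have h5 := h4 ▸ Set.mem_univ (Submodule.Quotient.mk y : L ⧸ I.toSubmodule)
      exact h5
    have h3 : (Set.range fun i => (Submodule.Quotient.mk (x i) : L ⧸ I.toSubmodule))
        = I.toSubmodule.mkQ '' Set.range x := by
      rw [← Set.range_comp]; rfl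
    rw [h3, ← Submodule.map_span] at h1
    obtain ⟨v, hv, hvy⟩ := h1
    have hsub : y - v ∈ I.toSubmodule := by
      rw [← Submodule.Quotient.mk_eq_zero, Submodule.Quotient.mk_sub]
      rw [show (Submodule.Quotient.mk v : L ⧸ I.toSubmodule) = I.toSubmodule.mkQ v from rfl, hvy]
      simp
    have hy : y = v + (y - v) := by abel
    rw [hy]
    exact Submodule.add_mem _ (Submodule.mem_sup_left hv) (Submodule.mem_sup_right hsub)
  -- decompose every element of `L` as (elt of V) + (elt of I)
  have hdec : ∀ y : L, ∃ v ∈ V, ∃ w ∈ I.toSubmodule, v + w = y := by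
    intro y
    have : y ∈ V ⊔ I.toSubmodule := by rw [hsup]; trivial
    exact Submodule.mem_sup.mp this
  choose v hv w hw hvw using hdec
  -- the finite generating set
  set S : Set L := (Set.range fun p : Fin d × Fin d => w ⁅x p.1, x p.2⁆) ∪
      (Set.range fun i => w (a i)) with hS
  have hSfin : S.Finite := (Set.finite_range _).union (Set.finite_range _)
  have hSI : S ⊆ I := by
    rintro z (⟨p, rfl⟩ | ⟨i, rfl⟩) <;> exact hw _
  set N : LieIdeal F L := LieSubmodule.lieSpan F L S with hN
  have hSN : S ⊆ N.toSubmodule := fun z hz => LieSubmodule.subset_lieSpan hz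
  set P : Submodule F L := V ⊔ N.toSubmodule with hP
  -- P is closed under brackets
  have hbr : ∀ p ∈ P, ∀ q ∈ P, ⁅p, q⁆ ∈ P := by
    have hVV : ∀ u ∈ V, ∀ z ∈ V, ⁅u, z⁆ ∈ P := by
      intro u hu
      induction hu using Submodule.span_induction with
      | mem u hu =>
        obtain ⟨i, rfl⟩ := hu
        intro z hz
        induction hz using Submodule.span_induction with
        | mem z hz =>
          obtain ⟨j, rfl⟩ := hz
          have h1 : w ⁅x i, x j⁆ ∈ N.toSubmodule := hSN (Or.inl ⟨(i, j), rfl⟩)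
          have h2 : ⁅x i, x j⁆ = v ⁅x i, x j⁆ + w ⁅x i, x j⁆ := (hvw _).symm
          rw [h2]
          exact Submodule.add_mem _ (Submodule.mem_sup_left (hv _)) (Submodule.mem_sup_right h1)
        | zero => simpa using P.zero_mem
        | add z₁ z₂ _ _ h₁ h₂ => rw [lie_add]; exact P.add_mem h₁ h₂
        | smul c z _ h => rw [lie_smul]; exact P.smul_mem c h
      | zero => intro z hz; simpa using P.zero_mem
      | add u₁ u₂ _ _ h₁ h₂ => intro z hz; rw [add_lie]; exact P.add_mem (h₁ z hz) (h₂ z hz)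
      | smul c u _ h => intro z hz; rw [smul_lie]; exact P.smul_mem c (h z hz)
    intro p hp q hq
    obtain ⟨vp, hvp, np, hnp, rfl⟩ := Submodule.mem_sup.mp hp
    obtain ⟨vq, hvq, nq, hnq, rfl⟩ := Submodule.mem_sup.mp hq
    have h1 : ⁅vp, nq⁆ ∈ N.toSubmodule := N.lie_mem hnq
    have h2 : ⁅np, vq⁆ ∈ N.toSubmodule := by
      have : ⁅np, vq⁆ = -⁅vq, np⁆ := (lie_skew _ _).symm
      rw [this]; exact Submodule.neg_mem _ (N.lie_mem hnp)
    have h3 : ⁅np, nq⁆ ∈ N.toSubmodule := N.lie_mem hnq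
    have : ⁅vp + np, vq + nq⁆ = ⁅vp, vq⁆ + (⁅vp, nq⁆ + (⁅np, vq⁆ + ⁅np, nq⁆)) := by
      rw [add_lie, lie_add, lie_add]; abel
    rw [this]
    exact P.add_mem (hVV vp hvp vq hvq)
      (Submodule.mem_sup_right (Submodule.add_mem _ h1 (Submodule.add_mem _ h2 h3)))
  -- P is a Lie subalgebra containing the generators, so P = ⊤
  let K : LieSubalgebra F L :=
    { P with lie_mem' := fun {p q} hp hq => hbr p hp q hq }
  have haK : Set.range a ⊆ K := by
    rintro z ⟨i, rfl⟩
    have h1 : w (a i) ∈ N.toSubmodule := hSN (Or.inr ⟨i, rfl⟩)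
    have h2 : a i = v (a i) + w (a i) := (hvw _).symm
    show a i ∈ P
    rw [h2]
    exact Submodule.add_mem _ (Submodule.mem_sup_left (hv _)) (Submodule.mem_sup_right h1)
  have hKtop : ∀ y : L, y ∈ P := by
    intro y
    have : LieSubalgebra.lieSpan F L (Set.range a) ≤ K := (LieSubalgebra.lieSpan_le).mpr haK
    rw [hgen] at this
    exact this trivial
  -- L ⧸ N is finite dimensional
  have hfin : FiniteDimensional F (L ⧸ N) := by
    have : FiniteDimensional F V := FiniteDimensional.span_of_finite F (Set.finite_range x)
    have hsurj : Function.Surjective ((N.toSubmodule.mkQ).comp V.subtype) := by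
      intro z
      obtain ⟨y, rfl⟩ := Submodule.Quotient.mk_surjective N.toSubmodule z
      obtain ⟨vy, hvy, ny, hny, rfl⟩ := Submodule.mem_sup.mp (hKtop y)
      refine ⟨⟨vy, hvy⟩, ?_⟩
      simp only [LinearMap.comp_apply, Submodule.subtype_apply, Submodule.mkQ_apply]
      rw [Submodule.Quotient.mk_add]
      rw [(Submodule.Quotient.mk_eq_zero _).mpr hny]
      simp
    exact Module.Finite.of_surjective _ hsurj
  exact ⟨S, hSfin, hSI, hfin⟩

end Aux

/-- An infinite-dimensional finitely generated Lie algebra, all of whose Lie-set elements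
are ad-nilpotent, has a just infinite homomorphic image. -/
theorem exists_just_infinite_image
    {F : Type*} {L : Type*} [Field F] [LieRing L] [LieAlgebra F L]
    {m : ℕ} (a : Fin m → L)
    (hgen : LieSubalgebra.lieSpan F L (Set.range a) = ⊤)
    (had : ∀ s : L, LieSetClosure (Set.range a) s → IsNilpotent (LieAlgebra.ad F L s))
    (hinf : ¬ FiniteDimensional F L) :
    ∃ J : LieIdeal F L, ¬ FiniteDimensional F (L ⧸ J) ∧
      ∀ K : LieIdeal F (L ⧸ J), K ≠ ⊥ → FiniteDimensional F ((L ⧸ J) ⧸ K) := by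
  classical
  set s : Set (LieIdeal F L) := {I | ¬ FiniteDimensional F (L ⧸ I)} with hsdef
  have hbot : (⊥ : LieIdeal F L) ∈ s := by
    intro hfin
    refine hinf ?_
    have h0 : Module.Finite F (L ⧸ ((⊥ : LieIdeal F L) : Submodule F L)) := hfin
    exact Module.Finite.equiv (Submodule.quotEquivOfEqBot _ rfl)
  -- chains have upper bounds in s
  have hchainub : ∀ c ⊆ s, IsChain (· ≤ ·) c → ∀ y ∈ c, ∃ ub ∈ s, ∀ z ∈ c, z ≤ ub := by
    intro c hcs hchain J₀ hJ₀
    refine ⟨sSup c, ?_, fun z hz => le_sSup hz⟩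
    intro hfin
    obtain ⟨S, hSfin, hSsup, hSquot⟩ := exists_fg_ideal_le a hgen (sSup c) hfin
    -- every element of S lies in some member of the chain
    have hdir : DirectedOn (· ≤ ·) {(p : Submodule F L) | p ∈ c} := by
      rintro _ ⟨p, hp, rfl⟩ _ ⟨q, hq, rfl⟩
      rcases hchain.total hp hq with h | h
      · exact ⟨q, ⟨q, hq, rfl⟩, h, le_rfl⟩
      · exact ⟨p, ⟨p, hp, rfl⟩, le_rfl, h⟩
    have hne : Set.Nonempty {(p : Submodule F L) | p ∈ c} := ⟨J₀, J₀, hJ₀, rfl⟩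
    have hmem : ∀ y ∈ S, ∃ p ∈ c, y ∈ p := by
      intro y hy
      have : y ∈ (sSup c : LieIdeal F L).toSubmodule := hSsup hy
      rw [LieSubmodule.sSup_toSubmodule] at this
      obtain ⟨_, ⟨p, hp, rfl⟩, hyp⟩ := (Submodule.mem_sSup_of_directed hne hdir).mp this
      exact ⟨p, hp, hyp⟩
    -- find a single member of the chain containing S
    have hfind : ∀ T : Set L, T.Finite → (∀ y ∈ T, ∃ p ∈ c, y ∈ p) → ∃ I₀ ∈ c, T ⊆ I₀ := by
      intro T hT
      refine Set.Finite.induction_on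
        (motive := fun T _ => (∀ y ∈ T, ∃ p ∈ c, y ∈ p) → ∃ I₀ ∈ c, T ⊆ I₀) T hT
        (fun _ => ⟨J₀, hJ₀, by simp⟩) ?_
      intro x T hx hTfin ih hmem'
      obtain ⟨I₁, hI₁, hTI₁⟩ := ih (fun y hy => hmem' y (Set.mem_insert_of_mem x hy))
      obtain ⟨p, hp, hxp⟩ := hmem' x (Set.mem_insert x T)
      rcases hchain.total hp hI₁ with h | h
      · exact ⟨I₁, hI₁, Set.insert_subset (h hxp) hTI₁⟩
      · exact ⟨p, hp, Set.insert_subset hxp (fun y hy => h (hTI₁ hy))⟩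
    obtain ⟨I₀, hI₀c, hSI₀⟩ := hfind S hSfin hmem
    have hle : (LieSubmodule.lieSpan F L S : LieIdeal F L) ≤ I₀ :=
      (LieSubmodule.lieSpan_le).mpr hSI₀
    exact hcs hI₀c (findim_quot_of_le hle hSquot)
  -- Zorn's lemma
  obtain ⟨J, -, hJs, hJmax⟩ := zorn_le_nonempty₀ s hchainub ⊥ hbot
  refine ⟨J, hJs, fun K hK => ?_⟩
  -- the pullback of K
  set I : LieIdeal F L :=
    { toSubmodule := (K : Submodule F (L ⧸ J)).comap J.toSubmodule.mkQ
      lie_mem := by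
        intro y z hz
        have hz' : LieSubmodule.Quotient.mk (N := J) z ∈ K := hz
        have : LieSubmodule.Quotient.mk (N := J) ⁅y, z⁆ =
            ⁅LieSubmodule.Quotient.mk (N := J) y, LieSubmodule.Quotient.mk (N := J) z⁆ :=
          rfl
        show LieSubmodule.Quotient.mk (N := J) ⁅y, z⁆ ∈ K
        rw [this]
        exact K.lie_mem hz' } with hI
  have hJI : J ≤ I := by
    intro y hy
    show Submodule.Quotient.mk y ∈ (K : Submodule F (L ⧸ J))
    rw [(Submodule.Quotient.mk_eq_zero _).mpr hy]
    exact K.zero_mem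
  have hIfin : FiniteDimensional F (L ⧸ I) := by
    by_contra hIs
    have hIJ : I ≤ J := hJmax hIs hJI
    apply hK
    rw [eq_bot_iff]
    intro k hk
    obtain ⟨y, rfl⟩ := LieSubmodule.Quotient.surjective_mk' J k
    have hyI : y ∈ I := hk
    have hyJ : y ∈ J := hIJ hyI
    have hy0 : LieSubmodule.Quotient.mk' J y = 0 := by
      rw [LieSubmodule.Quotient.mk_eq_zero]; exact hyJ
    rw [hy0]
    exact (⊥ : LieIdeal F (L ⧸ J)).zero_mem
  -- transfer finite dimensionality to the quotient by K
  have hker : I.toSubmodule ≤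
      LinearMap.ker (((K : Submodule F (L ⧸ J)).mkQ).comp J.toSubmodule.mkQ) := by
    intro y hy
    simp only [LinearMap.mem_ker, LinearMap.comp_apply, Submodule.mkQ_apply]
    exact (Submodule.Quotient.mk_eq_zero _).mpr hy
  have hsurj : Function.Surjective (Submodule.liftQ I.toSubmodule _ hker) := by
    intro z
    obtain ⟨u, rfl⟩ := Submodule.Quotient.mk_surjective (K : Submodule F (L ⧸ J)) z
    obtain ⟨y, rfl⟩ := Submodule.Quotient.mk_surjective J.toSubmodule u
    exact ⟨Submodule.Quotient.mk y, rfl⟩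
  exact Module.Finite.of_surjective _ hsurj
end

section
/- Let L be a Lie algebra over a field F, let n ≥ 3, and suppose there are scalars α_σ ∈ F indexed by the permutations σ of {1, …, n−1}, with α_id = 1, such that Σ_σ α_σ [x_0, x_{σ(1)}, …, x_{σ(n−1)}] = 0 (left-normed brackets) for all x_0, …, x_{n−1} ∈ L. Let I be a Lie ideal of L, s ∈ L and k ≥ 2 be such that x·ad(s)^k = 0 for all x ∈ I. Then for all elements y_0, y_2, …, y_{n−1} belonging to the set I·ad(s)^{k−1} = { x·ad(s)^{k−1} : x ∈ I } one has Σ_{σ : σ(1)=1} α_σ [y_0, y_{σ(2)}, …, y_{σ(n−1)}] = 0; in particular the subalgebra [I s^{k−1}] satisfies a multilinear identity of degree n−1 whose coefficient at the identity permutation equals 1. -/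
def leftNormed {L : Type*} [LieRing L] (x : L) (l : List L) : L :=
  l.foldl (fun u v => ⁅u, v⁆) x

lemma leftNormed_cons {L : Type*} [LieRing L] (x a : L) (l : List L) :
    leftNormed x (a :: l) = leftNormed ⁅x, a⁆ l := rfl

lemma leftNormed_zero {L : Type*} [LieRing L] (l : List L) :
    leftNormed (0 : L) l = 0 := by
  induction l with
  | nil => rfl
  | cons a l ih => rw [leftNormed_cons, zero_lie]; exact ih

theorem aux {F : Type*} {L : Type*} [Field F] [LieRing L] [LieAlgebra F L]
    (m : ℕ) (α : Equiv.Perm (Fin (m + 2)) → F)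
    (hid : ∀ (x0 : L) (x : Fin (m + 2) → L),
      ∑ σ : Equiv.Perm (Fin (m + 2)),
        α σ • leftNormed x0 (List.ofFn fun i => x (σ i)) = 0)
    (I : LieIdeal F L) (s : L) (k : ℕ) (hk : 2 ≤ k)
    (hIk : ∀ x ∈ I, ((LieAlgebra.ad F L s) ^ k) x = 0)
    (y0 : L) (hy0 : ∃ z ∈ I, y0 = ((LieAlgebra.ad F L s) ^ (k - 1)) z)
    (x : Fin (m + 2) → L)
    (hx : ∀ i : Fin (m + 2), i ≠ 0 →
      ∃ z ∈ I, x i = ((LieAlgebra.ad F L s) ^ (k - 1)) z) :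
    ∑ σ ∈ Finset.univ.filter
        (fun σ : Equiv.Perm (Fin (m + 2)) => σ 0 = 0),
      α σ • leftNormed y0 (List.ofFn fun i => x (σ i)).tail = 0 := by
  obtain ⟨z0, hz0I, hz0⟩ := hy0
  set x' : Fin (m + 2) → L :=
    fun i => if i = 0 then ((LieAlgebra.ad F L s) ^ (k - 2)) z0 else x i with hx'
  have key := hid s x'
  rw [← Finset.sum_filter_add_sum_filter_not Finset.univ
    (fun σ : Equiv.Perm (Fin (m + 2)) => σ 0 = 0)] at key
  have h2 : ∑ σ ∈ Finset.univ.filter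
      (fun σ : Equiv.Perm (Fin (m + 2)) => ¬ σ 0 = 0),
      α σ • leftNormed s (List.ofFn fun i => x' (σ i)) = 0 := by
    apply Finset.sum_eq_zero
    intro σ hσ
    simp only [Finset.mem_filter] at hσ
    obtain ⟨z, hzI, hz⟩ := hx (σ 0) hσ.2
    rw [List.ofFn_succ, leftNormed_cons]
    have hxs : x' (σ 0) = x (σ 0) := if_neg hσ.2
    have hbr : ⁅s, x' (σ 0)⁆ = 0 := by
      rw [hxs, hz]
      show (LieAlgebra.ad F L s) (((LieAlgebra.ad F L s) ^ (k - 1)) z) = 0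
      rw [← Module.End.mul_apply, ← pow_succ']
      have hk1 : k - 1 + 1 = k := by omega
      rw [hk1]
      exact hIk z hzI
    rw [hbr, leftNormed_zero, smul_zero]
  rw [h2, add_zero] at key
  rw [← key]
  apply Finset.sum_congr rfl
  intro σ hσ
  simp only [Finset.mem_filter] at hσ
  congr 1
  conv_lhs => rw [List.ofFn_succ, List.tail_cons]
  conv_rhs => rw [List.ofFn_succ, leftNormed_cons]
  have hxs : x' (σ 0) = ((LieAlgebra.ad F L s) ^ (k - 2)) z0 := by
    rw [hσ.2]; exact if_pos rfl
  have hbr : ⁅s, x' (σ 0)⁆ = y0 := by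
    rw [hxs]
    show (LieAlgebra.ad F L s) (((LieAlgebra.ad F L s) ^ (k - 2)) z0) = y0
    rw [← Module.End.mul_apply, ← pow_succ']
    have hk2 : k - 2 + 1 = k - 1 := by omega
    rw [hk2, hz0]
  rw [hbr]
  apply congrArg
  apply congrArg
  funext i
  have hne : σ i.succ ≠ 0 := by
    rw [← hσ.2]
    intro h
    exact (Fin.succ_ne_zero i) (σ.injective h)
  exact (if_neg hne).symm

/-- If `L` satisfies a multilinear identity of degree `n` (with coefficient 1 at the identity
permutation), `I` is an ideal, `s ∈ L`, `k ≥ 2` and `I·ad(s)^k = 0`, then the elements of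
`I·ad(s)^{k-1}` satisfy the identity of degree `n-1` obtained by keeping the terms with
`σ(1) = 1`. -/
theorem identity_of_smaller_degree_on_ad_image
    {F : Type*} {L : Type*} [Field F] [LieRing L] [LieAlgebra F L]
    (n : ℕ) (hn : 3 ≤ n) (α : Equiv.Perm (Fin (n - 1)) → F) (hα : α 1 = 1)
    (hid : ∀ (x0 : L) (x : Fin (n - 1) → L),
      ∑ σ : Equiv.Perm (Fin (n - 1)),
        α σ • leftNormed x0 (List.ofFn fun i => x (σ i)) = 0)
    (I : LieIdeal F L) (s : L) (k : ℕ) (hk : 2 ≤ k)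
    (hIk : ∀ x ∈ I, ((LieAlgebra.ad F L s) ^ k) x = 0)
    (y0 : L) (hy0 : ∃ x ∈ I, y0 = ((LieAlgebra.ad F L s) ^ (k - 1)) x)
    (x : Fin (n - 1) → L)
    (hx : ∀ i : Fin (n - 1), i ≠ ⟨0, by omega⟩ →
      ∃ z ∈ I, x i = ((LieAlgebra.ad F L s) ^ (k - 1)) z) :
    ∑ σ ∈ Finset.univ.filter
        (fun σ : Equiv.Perm (Fin (n - 1)) => σ ⟨0, by omega⟩ = ⟨0, by omega⟩),
      α σ • leftNormed y0 (List.ofFn fun i => x (σ i)).tail = 0 := by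
  obtain ⟨m, rfl⟩ : ∃ m, n = m + 3 := ⟨n - 3, by omega⟩
  exact aux m α hid I s k hk hIk y0 hy0 x hx
end

section
/- Let L be a Lie algebra over a field F, let I be a Lie ideal of L, let s ∈ L and k ≥ 2 be such that x·ad(s)^k = 0 for all x ∈ I. Let t ≥ 2, set N = k·t − 1, and let a_1, …, a_N ∈ I. Then the composition of operators ad(a_1·ad(s)^{k−1}) · ad(a_2·ad(s)^{k−1}) · … · ad(a_N·ad(s)^{k−1}) (operators on L applied from left to right) lies in the F-linear span of the operators of the form P' · ad(s)^{k−1} · ∏_{j=0}^{t−2} ( ad(a_{i+j}) · ad(s)^{k−1} ) · P'', where 1 ≤ i ≤ N − t + 2 and P', P'' are (possibly empty) finite products of operators from the set {ad(a_1), …, ad(a_N), ad(s)}. -/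
open LieAlgebra

/-- The composition (applied from left to right) of the operators
`ad(b 1), ad(b 2), …, ad(b N)` on a Lie algebra. -/
def adProd (F : Type*) {L : Type*} [Field F] [LieRing L] [LieAlgebra F L]
    (b : ℕ → L) : ℕ → Module.End F L
  | 0 => 1
  | j + 1 => LieAlgebra.ad F L (b (j + 1)) * adProd F b j

/-- The operator `∏_{j=0}^{c-1} (ad(a (i+j)) · Sk)`, applied from left to right. -/
def midProd (F : Type*) {L : Type*} [Field F] [LieRing L] [LieAlgebra F L]
    (a : ℕ → L) (Sk : Module.End F L) (i : ℕ) : ℕ → Module.End F L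
  | 0 => 1
  | c + 1 => (Sk * LieAlgebra.ad F L (a (i + c))) * midProd F a Sk i c

section Aux

variable (F : Type*) {L : Type*} [Field F] [LieRing L] [LieAlgebra F L]

/-- The word `A^{k-1-ι n} T_n A^{ι n} ⋯ A^{k-1-ι 1} T_1 A^{ι 1}` where `A = ad s`,
`T_j = ad (a j)`. -/
def wordW (a : ℕ → L) (s : L) (k : ℕ) (ι : ℕ → ℕ) : ℕ → Module.End F L
  | 0 => 1
  | n + 1 =>
      ((LieAlgebra.ad F L s) ^ (k - 1 - ι (n + 1)) * LieAlgebra.ad F L (a (n + 1)) *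
        (LieAlgebra.ad F L s) ^ (ι (n + 1))) * wordW a s k ι n

/-- The partial word using only the factors with index `> m`. -/
def wordV (a : ℕ → L) (s : L) (k : ℕ) (ι : ℕ → ℕ) (m : ℕ) : ℕ → Module.End F L
  | 0 => 1
  | n + 1 =>
      if n + 1 ≤ m then 1 else
      ((LieAlgebra.ad F L s) ^ (k - 1 - ι (n + 1)) * LieAlgebra.ad F L (a (n + 1)) *
        (LieAlgebra.ad F L s) ^ (ι (n + 1))) * wordV a s k ι m n

variable {F}

attribute [local instance 100] LieRing.ofAssociativeRing

lemma wordW_congr {a : ℕ → L} {s : L} {k : ℕ} {ι ι' : ℕ → ℕ} {n : ℕ}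
    (h : ∀ j, 1 ≤ j → j ≤ n → ι j = ι' j) :
    wordW F a s k ι n = wordW F a s k ι' n := by
  induction n with
  | zero => rfl
  | succ n ih =>
    rw [wordW, wordW, h (n+1) (Nat.le_add_left _ _) le_rfl,
      ih fun j h1 h2 => h j h1 (h2.trans (Nat.le_succ n))]

lemma wordW_eq_wordV_mul {a : ℕ → L} {s : L} {k : ℕ} {ι : ℕ → ℕ} {m n : ℕ} (h : m ≤ n) :
    wordW F a s k ι n = wordV F a s k ι m n * wordW F a s k ι m := by
  induction n with
  | zero =>
    have : m = 0 := Nat.le_zero.mp h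
    subst this; simp [wordV, wordW]
  | succ n ih =>
    rcases Nat.lt_or_ge m (n+1) with hm | hm
    · rw [wordW, wordV, if_neg (by omega), ih (by omega)]; simp only [mul_assoc]
    · have : m = n + 1 := le_antisymm h hm
      subst this
      rw [wordV, if_pos le_rfl, one_mul]

lemma wordV_self {a : ℕ → L} {s : L} {k : ℕ} {ι : ℕ → ℕ} (m : ℕ) :
    wordV F a s k ι m m = 1 := by
  cases m with
  | zero => rfl
  | succ m => rw [wordV, if_pos le_rfl]

lemma wordV_succ_left {a : ℕ → L} {s : L} {k : ℕ} {ι : ℕ → ℕ} {m n : ℕ} (h : m < n) :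
    wordV F a s k ι m n = wordV F a s k ι (m + 1) n *
      ((LieAlgebra.ad F L s) ^ (k - 1 - ι (m + 1)) * LieAlgebra.ad F L (a (m + 1)) *
        (LieAlgebra.ad F L s) ^ (ι (m + 1))) := by
  induction n with
  | zero => omega
  | succ n ih =>
    by_cases hmn : m = n
    · subst hmn
      rw [wordV, if_neg (by omega), wordV_self, wordV_self, mul_one, one_mul]
    · rw [wordV, if_neg (by omega), ih (by omega), wordV, if_neg (by omega)]
      simp only [mul_assoc]

/-- Products of elements of spans lie in an appropriate span. -/
lemma mul_mem_span {S T U : Set (Module.End F L)} {x y : Module.End F L}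
    (hx : x ∈ Submodule.span F S) (hy : y ∈ Submodule.span F T)
    (h : ∀ p ∈ S, ∀ q ∈ T, p * q ∈ Submodule.span F U) :
    x * y ∈ Submodule.span F U := by
  induction hx using Submodule.span_induction with
  | mem p hp =>
    induction hy using Submodule.span_induction with
    | mem q hq => exact h p hp q hq
    | zero => rw [mul_zero]; exact zero_mem _
    | add u v hu hv h1 h2 => rw [mul_add]; exact add_mem h1 h2
    | smul c u hu h1 => rw [mul_smul_comm]; exact Submodule.smul_mem _ _ h1
  | zero => rw [zero_mul]; exact zero_mem _
  | add u v hu hv h1 h2 => rw [add_mul]; exact add_mem h1 h2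
  | smul c u hu h1 => rw [smul_mul_assoc]; exact Submodule.smul_mem _ _ h1

/-- The key expansion: `ad (A^m x)` lies in the span of the `A^{m-i} ∘ ad x ∘ A^i`. -/
lemma ad_pow_apply_mem_span (s x : L) (m : ℕ) :
    LieAlgebra.ad F L (((LieAlgebra.ad F L s) ^ m) x) ∈
      Submodule.span F {E : Module.End F L | ∃ i ≤ m,
        E = (LieAlgebra.ad F L s) ^ (m - i) * LieAlgebra.ad F L x * (LieAlgebra.ad F L s) ^ i} := by
  induction m with
  | zero =>
    refine Submodule.subset_span ⟨0, le_rfl, ?_⟩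
    simp
  | succ m ih =>
    have hy : ((LieAlgebra.ad F L s) ^ (m + 1)) x =
        ⁅s, ((LieAlgebra.ad F L s) ^ m) x⁆ := by
      rw [pow_succ', Module.End.mul_apply, ad_apply]
    rw [hy, LieHom.map_lie, Ring.lie_def]
    refine sub_mem ?_ ?_
    · refine mul_mem_span (Submodule.mem_span_singleton_self (LieAlgebra.ad F L s)) ih ?_
      rintro p hp q ⟨i, him, rfl⟩
      rw [Set.mem_singleton_iff.mp hp]
      refine Submodule.subset_span ⟨i, him.trans (Nat.le_succ m), ?_⟩
      rw [show m + 1 - i = (m - i) + 1 by omega, pow_succ']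
      simp only [mul_assoc]
    · refine mul_mem_span ih (Submodule.mem_span_singleton_self (LieAlgebra.ad F L s)) ?_
      rintro p ⟨i, him, rfl⟩ q hq
      rw [Set.mem_singleton_iff.mp hq]
      refine Submodule.subset_span ⟨i + 1, by omega, ?_⟩
      rw [show m + 1 - (i + 1) = m - i by omega, pow_succ]
      simp only [mul_assoc]

/-- If moreover every value of `ι` is `≤ k-1` and `ι` increases somewhere inside `[1,n]`,
the word vanishes. -/
lemma factor_mul_factor_eq_zero {a : ℕ → L} {s : L} {k : ℕ} {ι : ℕ → ℕ} {j : ℕ}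
    (hzj : (LieAlgebra.ad F L s) ^ k * LieAlgebra.ad F L (a j) = 0)
    (hbd : ι j ≤ k - 1) (hk : 1 ≤ k) (hlt : ι j < ι (j + 1)) :
    ((LieAlgebra.ad F L s) ^ (k - 1 - ι (j + 1)) * LieAlgebra.ad F L (a (j + 1)) *
        (LieAlgebra.ad F L s) ^ (ι (j + 1))) *
      ((LieAlgebra.ad F L s) ^ (k - 1 - ι j) * LieAlgebra.ad F L (a j) *
        (LieAlgebra.ad F L s) ^ (ι j)) = 0 := by
  set A := LieAlgebra.ad F L s
  set u := ι (j + 1)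
  set v := ι j
  have key : A ^ u * (A ^ (k - 1 - v) * (LieAlgebra.ad F L (a j) * A ^ v)) = 0 := by
    rw [← mul_assoc, ← mul_assoc, ← pow_add,
      show u + (k - 1 - v) = (u + (k - 1 - v) - k) + k by omega, pow_add, mul_assoc _ (A ^ k),
      hzj, mul_zero, zero_mul]
  calc (A ^ (k - 1 - u) * LieAlgebra.ad F L (a (j + 1)) * A ^ u) *
        (A ^ (k - 1 - v) * LieAlgebra.ad F L (a j) * A ^ v)
      = A ^ (k - 1 - u) * (LieAlgebra.ad F L (a (j + 1)) *
          (A ^ u * (A ^ (k - 1 - v) * (LieAlgebra.ad F L (a j) * A ^ v)))) := by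
        simp only [mul_assoc]
    _ = 0 := by rw [key, mul_zero, mul_zero]

/-- If every value of `ι` is `≤ k-1` and `ι` increases somewhere inside `[1,n]`,
the word vanishes. -/
lemma wordW_eq_zero {a : ℕ → L} {s : L} {k : ℕ} {ι : ℕ → ℕ} {n : ℕ}
    (hz : ∀ j, 1 ≤ j → j + 1 ≤ n → (LieAlgebra.ad F L s) ^ k * LieAlgebra.ad F L (a j) = 0)
    (hbd : ∀ j, ι j ≤ k - 1) (hk : 1 ≤ k)
    (hbad : ∃ j, 1 ≤ j ∧ j + 1 ≤ n ∧ ι j < ι (j + 1)) :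
    wordW F a s k ι n = 0 := by
  induction n with
  | zero => omega
  | succ n ih =>
    obtain ⟨j, hj1, hj2, hjlt⟩ := hbad
    by_cases hjn : j + 1 ≤ n
    · rw [wordW, ih (fun j h1 h2 => hz j h1 (by omega)) ⟨j, hj1, hjn, hjlt⟩, mul_zero]
    · have hjn' : j = n := by omega
      subst hjn'
      cases j with
      | zero => omega
      | succ p =>
        rw [wordW, wordW, ← mul_assoc,
          factor_mul_factor_eq_zero (hz (p + 1) (by omega) (by omega)) (hbd _) hk hjlt,
          zero_mul]

lemma run_block {a : ℕ → L} {s : L} {k : ℕ} {ι : ℕ → ℕ} {i r : ℕ}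
    (hi : 1 ≤ i) (hr : r ≤ k - 1) (c : ℕ) (hrun : ∀ j < c, ι (i + j) = r) :
    (LieAlgebra.ad F L s) ^ r * wordV F a s k ι (i - 1) (i - 1 + c) =
      midProd F a ((LieAlgebra.ad F L s) ^ (k - 1)) i c * (LieAlgebra.ad F L s) ^ r := by
  induction c with
  | zero => rw [Nat.add_zero, wordV_self, midProd, mul_one, one_mul]
  | succ c ih =>
    have hS : (LieAlgebra.ad F L s) ^ r * (LieAlgebra.ad F L s) ^ (k - 1 - r) =
        (LieAlgebra.ad F L s) ^ (k - 1) := by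
      rw [← pow_add, show r + (k - 1 - r) = k - 1 by omega]
    have hidx : i - 1 + c + 1 = i + c := by omega
    rw [show i - 1 + (c + 1) = (i - 1 + c) + 1 by omega, wordV, if_neg (by omega), hidx,
      hrun c (Nat.lt_succ_self c), midProd]
    calc (LieAlgebra.ad F L s) ^ r *
          ((LieAlgebra.ad F L s) ^ (k - 1 - r) * LieAlgebra.ad F L (a (i + c)) *
            (LieAlgebra.ad F L s) ^ r * wordV F a s k ι (i - 1) (i - 1 + c))
        = ((LieAlgebra.ad F L s) ^ r * (LieAlgebra.ad F L s) ^ (k - 1 - r)) *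
            (LieAlgebra.ad F L (a (i + c)) *
              ((LieAlgebra.ad F L s) ^ r * wordV F a s k ι (i - 1) (i - 1 + c))) := by
          simp only [mul_assoc]
      _ = (LieAlgebra.ad F L s) ^ (k - 1) * (LieAlgebra.ad F L (a (i + c)) *
            (midProd F a ((LieAlgebra.ad F L s) ^ (k - 1)) i c * (LieAlgebra.ad F L s) ^ r)) := by
          rw [hS, ih (fun j hj => hrun j (by omega))]
      _ = (LieAlgebra.ad F L s) ^ (k - 1) * LieAlgebra.ad F L (a (i + c)) *
            midProd F a ((LieAlgebra.ad F L s) ^ (k - 1)) i c * (LieAlgebra.ad F L s) ^ r := by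
          simp only [mul_assoc]

lemma pigeonhole {k t : ℕ} (hk : 1 ≤ k) (e : ℕ → ℕ) (he0 : e 0 = k - 1)
    (hmono : ∀ j, e (j + 1) ≤ e j) (ht : 1 ≤ t) :
    ∃ j ≤ k * t - t, ∀ c ≤ t, e (j + c) = e j := by
  have hchain : ∀ j m, e (j + m) ≤ e j := by
    intro j m
    induction m with
    | zero => exact le_rfl
    | succ m ih => exact le_trans (hmono (j + m)) ih
  by_contra hcon
  push_neg at hcon
  have hstep : ∀ j, j ≤ k * t - t → e (j + t) < e j := by
    intro j hj
    obtain ⟨c, hc, hne⟩ := hcon j hj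
    have h1 : e (j + t) ≤ e (j + c) := by
      rw [show j + t = (j + c) + (t - c) by omega]
      exact hchain _ _
    exact lt_of_le_of_lt h1 (lt_of_le_of_ne (hchain j c) hne)
  have hmt : ∀ c, c ≤ k → e (c * t) + c ≤ k - 1 := by
    intro c hc
    induction c with
    | zero => simpa using he0.le
    | succ c ih =>
      have h1 := ih (by omega)
      have h2 : e ((c + 1) * t) < e (c * t) := by
        rw [show (c + 1) * t = c * t + t by ring]
        refine hstep _ ?_
        calc c * t ≤ (k - 1) * t := Nat.mul_le_mul_right t (by omega)
          _ = k * t - t := by rw [Nat.sub_mul, one_mul]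
      omega
  have := hmt k le_rfl
  omega

end Aux

/-- Lemma 7: if `I·ad(s)^k = 0`, `k ≥ 2`, `t ≥ 2`, `N = kt - 1` and `a_1, …, a_N ∈ I`,
then `ad(a_1·ad(s)^{k-1}) ⋯ ad(a_N·ad(s)^{k-1})` is a linear combination of operators
`P'·ad(s)^{k-1}·∏_{j=0}^{t-2}(ad(a_{i+j})·ad(s)^{k-1})·P''` with `P', P''` products of
the `ad(a_j)`'s and `ad(s)`. -/
theorem ad_image_product_mem_span
    (F : Type*) {L : Type*} [Field F] [LieRing L] [LieAlgebra F L]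
    (I : LieIdeal F L) (s : L) (k : ℕ) (hk : 2 ≤ k)
    (hIk : ∀ x ∈ I, ((LieAlgebra.ad F L s) ^ k) x = 0)
    (t : ℕ) (ht : 2 ≤ t) (N : ℕ) (hN : N = k * t - 1)
    (a : ℕ → L) (ha : ∀ j, 1 ≤ j → j ≤ N → a j ∈ I) :
    adProd F (fun j => ((LieAlgebra.ad F L s) ^ (k - 1)) (a j)) N ∈
      Submodule.span F
        { E : Module.End F L | ∃ i : ℕ, 1 ≤ i ∧ i ≤ N - t + 2 ∧
          ∃ P' ∈ Submonoid.closure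
              ({LieAlgebra.ad F L s} ∪ (fun j => LieAlgebra.ad F L (a j)) '' {j | 1 ≤ j ∧ j ≤ N}),
          ∃ P'' ∈ Submonoid.closure
              ({LieAlgebra.ad F L s} ∪ (fun j => LieAlgebra.ad F L (a j)) '' {j | 1 ≤ j ∧ j ≤ N}),
          E = P'' * midProd F a ((LieAlgebra.ad F L s) ^ (k - 1)) i (t - 1) *
              ((LieAlgebra.ad F L s) ^ (k - 1)) * P' } := by
  -- arithmetic facts
  set M := k * t with hM
  have hM4 : 2 * 2 ≤ M := Nat.mul_le_mul hk ht
  have hM2t : 2 * t ≤ M := Nat.mul_le_mul_right t hk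
  have htN : t ≤ N := by omega
  have hNM : N + 1 = M := by omega
  -- the key vanishing relation
  have hzero : ∀ j, 1 ≤ j → j ≤ N →
      (LieAlgebra.ad F L s) ^ k * LieAlgebra.ad F L (a j) = 0 := by
    intro j h1 h2
    ext x
    have hmem : ⁅a j, x⁆ ∈ I := lie_mem_left (R := F) (L := L) I (a j) x (ha j h1 h2)
    simp only [Module.End.mul_apply, LinearMap.zero_apply, ad_apply]
    exact hIk _ hmem
  -- the generating set and closure facts
  set G : Set (Module.End F L) :=
    {LieAlgebra.ad F L s} ∪ (fun j => LieAlgebra.ad F L (a j)) '' {j | 1 ≤ j ∧ j ≤ N} with hG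
  have hAG : ∀ r : ℕ, (LieAlgebra.ad F L s) ^ r ∈ Submonoid.closure G := by
    intro r
    refine pow_mem (Submonoid.subset_closure ?_) r
    rw [hG]
    exact Set.mem_union_left _ rfl
  have hTG : ∀ j, 1 ≤ j → j ≤ N → LieAlgebra.ad F L (a j) ∈ Submonoid.closure G := by
    intro j h1 h2
    refine Submonoid.subset_closure ?_
    rw [hG]
    exact Set.mem_union_right _ ⟨j, ⟨h1, h2⟩, rfl⟩
  have hWG : ∀ (ι : ℕ → ℕ) (n : ℕ), n ≤ N → wordW F a s k ι n ∈ Submonoid.closure G := by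
    intro ι n
    induction n with
    | zero => intro _; exact one_mem _
    | succ n ih =>
      intro h
      rw [wordW]
      exact mul_mem (mul_mem (mul_mem (hAG _) (hTG _ (by omega) (by omega))) (hAG _))
        (ih (by omega))
  have hVG : ∀ (ι : ℕ → ℕ) (m n : ℕ), n ≤ N → wordV F a s k ι m n ∈ Submonoid.closure G := by
    intro ι m n
    induction n with
    | zero => intro _; exact one_mem _
    | succ n ih =>
      intro h
      rw [wordV]
      split
      · exact one_mem _
      · exact mul_mem (mul_mem (mul_mem (hAG _) (hTG _ (by omega) (by omega))) (hAG _))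
          (ih (by omega))
  -- Step 1: expand the product into words
  have step2 : ∀ n, n ≤ N → adProd F (fun j => ((LieAlgebra.ad F L s) ^ (k - 1)) (a j)) n ∈
      Submodule.span F {E : Module.End F L |
        ∃ ι : ℕ → ℕ, (∀ j, ι j ≤ k - 1) ∧ E = wordW F a s k ι n} := by
    intro n
    induction n with
    | zero => intro _; exact Submodule.subset_span ⟨fun _ => 0, fun _ => Nat.zero_le _, rfl⟩
    | succ n ih =>
      intro h
      rw [adProd]
      refine mul_mem_span (ad_pow_apply_mem_span s (a (n + 1)) (k - 1)) (ih (by omega)) ?_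
      rintro p ⟨i, hik, rfl⟩ q ⟨ι, hιbd, rfl⟩
      refine Submodule.subset_span ⟨Function.update ι (n + 1) i, ?_, ?_⟩
      · intro j
        by_cases hj : j = n + 1
        · subst hj; rw [Function.update_self]; exact hik
        · rw [Function.update_of_ne hj]; exact hιbd j
      · rw [wordW, Function.update_self]
        congr 1
        exact wordW_congr fun j h1 h2 => (Function.update_of_ne (by omega) i ι).symm
  -- Step 2: each word lies in the target span
  refine Submodule.span_le.mpr ?_ (step2 N le_rfl)
  rintro E ⟨ι, hbd, rfl⟩
  by_cases hbad : ∃ j, 1 ≤ j ∧ j + 1 ≤ N ∧ ι j < ι (j + 1)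
  · rw [wordW_eq_zero (fun j h1 h2 => hzero j h1 (by omega)) hbd (by omega) hbad]
    exact zero_mem _
  · push_neg at hbad
    -- ι is nonincreasing on [1, N]; find a run via the pigeonhole principle
    set e : ℕ → ℕ := fun j => if j = 0 then k - 1 else if j ≤ N then ι j else 0 with he
    have heval : ∀ j, 1 ≤ j → j ≤ N → e j = ι j := by
      intro j h1 h2
      show (if j = 0 then k - 1 else if j ≤ N then ι j else 0) = ι j
      rw [if_neg (by omega), if_pos h2]
    have hmono : ∀ j, e (j + 1) ≤ e j := by
      intro j
      by_cases h0 : j = 0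
      · subst h0
        show (if 0 + 1 = 0 then k - 1 else if 0 + 1 ≤ N then ι (0 + 1) else 0) ≤
          (if (0 : ℕ) = 0 then k - 1 else if 0 ≤ N then ι 0 else 0)
        rw [if_pos rfl, if_neg (by omega)]
        split
        · exact hbd 1
        · exact Nat.zero_le _
      · by_cases hjN : j + 1 ≤ N
        · rw [heval _ (by omega) hjN, heval _ (by omega) (by omega)]
          exact hbad j (by omega) hjN
        · show (if j + 1 = 0 then k - 1 else if j + 1 ≤ N then ι (j + 1) else 0) ≤ e j
          rw [if_neg (by omega), if_neg hjN]
          exact Nat.zero_le _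
    have he0 : e 0 = k - 1 := by
      show (if (0 : ℕ) = 0 then k - 1 else if 0 ≤ N then ι 0 else 0) = k - 1
      rw [if_pos rfl]
    obtain ⟨j0, hj0, hrun⟩ := pigeonhole (k := k) (t := t) (by omega) e he0 hmono (by omega)
    rw [show k * t - t = N + 1 - t by omega] at hj0
    set r := e j0 with hr
    have hrbd : r ≤ k - 1 := by
      rw [hr]
      by_cases h0 : j0 = 0
      · rw [h0, he0]
      · rw [heval _ (by omega) (by omega)]
        exact hbd j0
    set i := j0 + 1 with hi
    have hι_run : ∀ j, i ≤ j → j ≤ j0 + t → j ≤ N → ι j = r := by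
      intro j h1 h2 h3
      rw [← heval j (by omega) h3, show j = j0 + (j - j0) by omega]
      exact hrun (j - j0) (by omega)
    -- the left factor P'
    have hP' : ∃ P' ∈ Submonoid.closure G,
        wordW F a s k ι (i - 1) = (LieAlgebra.ad F L s) ^ (k - 1 - r) * P' := by
      by_cases h0 : j0 = 0
      · refine ⟨1, one_mem _, ?_⟩
        have hrk : r = k - 1 := by rw [hr, h0]; exact he0
        rw [show i - 1 = 0 by omega, hrk, Nat.sub_self, pow_zero, one_mul]
        rfl
      · have hj0N : j0 ≤ N := by omega
        refine ⟨LieAlgebra.ad F L (a j0) * ((LieAlgebra.ad F L s) ^ r * wordW F a s k ι (j0 - 1)),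
          mul_mem (hTG _ (by omega) hj0N) (mul_mem (hAG _) (hWG _ _ (by omega))), ?_⟩
        rw [show i - 1 = j0 by omega, show j0 = (j0 - 1) + 1 by omega]
        rw [wordW, show j0 - 1 + 1 = j0 by omega,
          show ι j0 = r from by rw [hr]; exact (heval j0 (by omega) hj0N).symm]
        simp only [mul_assoc]
    -- the right factor P''
    have hP'' : ∃ P'' ∈ Submonoid.closure G,
        wordV F a s k ι (i + t - 2) N = P'' * (LieAlgebra.ad F L s) ^ r := by
      by_cases hend : i + t - 2 = N
      · refine ⟨1, one_mem _, ?_⟩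
        have hr0 : r = 0 := by
          have := hrun t le_rfl
          rw [show j0 + t = N + 1 by omega] at this
          rw [← this]
          show (if N + 1 = 0 then k - 1 else if N + 1 ≤ N then ι (N + 1) else 0) = 0
          rw [if_neg (by omega), if_neg (by omega)]
        rw [hend, wordV_self, hr0, pow_zero, one_mul]
      · have hlt : i + t - 2 < N := by omega
        refine ⟨wordV F a s k ι (i + t - 2 + 1) N *
            ((LieAlgebra.ad F L s) ^ (k - 1 - r) * LieAlgebra.ad F L (a (i + t - 2 + 1))),
          mul_mem (hVG _ _ _ le_rfl) (mul_mem (hAG _) (hTG _ (by omega) (by omega))), ?_⟩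
        rw [wordV_succ_left hlt,
          show ι (i + t - 2 + 1) = r from hι_run _ (by omega) (by omega) (by omega)]
        simp only [mul_assoc]
    obtain ⟨P', hP'G, hWi⟩ := hP'
    obtain ⟨P'', hP''G, hVtop⟩ := hP''
    -- the middle block
    have hblk := run_block (F := F) (a := a) (s := s) (k := k) (ι := ι) (i := i) (r := r)
      (by omega) hrbd (t - 1) (fun j hj => hι_run (i + j) (by omega) (by omega) (by omega))
    rw [show i - 1 + (t - 1) = i + t - 2 by omega] at hblk
    refine Submodule.subset_span ⟨i, by omega, by omega, P', hP'G, P'', hP''G, ?_⟩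
    calc wordW F a s k ι N
        = wordV F a s k ι (i + t - 2) N *
            (wordV F a s k ι (i - 1) (i + t - 2) * wordW F a s k ι (i - 1)) := by
          rw [wordW_eq_wordV_mul (show i + t - 2 ≤ N by omega),
            wordW_eq_wordV_mul (show i - 1 ≤ i + t - 2 by omega)]
      _ = P'' * ((LieAlgebra.ad F L s) ^ r * wordV F a s k ι (i - 1) (i + t - 2) *
            (LieAlgebra.ad F L s) ^ (k - 1 - r)) * P' := by
          rw [hVtop, hWi]
          simp only [mul_assoc]
      _ = P'' * (midProd F a ((LieAlgebra.ad F L s) ^ (k - 1)) i (t - 1) *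
            ((LieAlgebra.ad F L s) ^ r * (LieAlgebra.ad F L s) ^ (k - 1 - r))) * P' := by
          rw [hblk]
          simp only [mul_assoc]
      _ = P'' * midProd F a ((LieAlgebra.ad F L s) ^ (k - 1)) i (t - 1) *
            ((LieAlgebra.ad F L s) ^ (k - 1)) * P' := by
          rw [← pow_add, show r + (k - 1 - r) = k - 1 by omega]
          simp only [mul_assoc]
end

section
/- Let A be a (not necessarily associative) algebra over a field F and let d_1, …, d_n be derivations of A such that d_i ∘ d_j = d_j ∘ d_i for all i, j, d_i ∘ d_i = 0 for all i, and (x·d_i)(y·d_i) = 0 for all x, y ∈ A and all i. Let U_k = U_k(d_1, …, d_n). Then: (1) (ab)U_m = Σ_{i=0}^{m} (aU_i)(bU_{m−i}) for all a, b ∈ A and all m ≥ 0; (2) the map a ↦ Σ_{i=0}^{n} aU_i is an algebra automorphism of A; (3) for all a, x ∈ A and m ≥ 0, x·R(aU_m) = Σ_{i=0}^{m} (−1)^i ((xU_i)·a)U_{m−i}, where R(a) denotes the operator of right multiplication by a; (4) U_i ∘ U_j = C(i+j, i)·U_{i+j} for all i, j ≥ 0, where C(i+j,i) is the binomial coefficient.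 -/
/-- The divided-power operator `U_k(d_1, …, d_n)`: the sum over all `k`-element subsets
`{i_1 < … < i_k}` of `{1, …, n}` of the compositions `d_{i_1} ∘ ⋯ ∘ d_{i_k}`.
`U_0` is the identity and `U_k = 0` for `k > n`. -/
noncomputable def Uop {F : Type*} {A : Type*} [Field F] [AddCommGroup A] [Module F A]
    {n : ℕ} (d : Fin n → Module.End F A) (k : ℕ) : Module.End F A :=
  ∑ S ∈ Finset.powersetCard k (Finset.univ : Finset (Fin n)),
    ((S.sort (· ≤ ·)).map d).prod

namespace UopAux

open Finset

private lemma multiset_noncommProd_eq {M : Type*} [Monoid M] (s : Multiset M) (l : List M)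
    (h : s = ↑l) (comm) : s.noncommProd comm = l.prod := by
  subst h; exact Multiset.noncommProd_coe l comm

variable {F : Type*} {A : Type*} [Field F] [AddCommGroup A] [Module F A]
  {n : ℕ} {d : Fin n → Module.End F A}

/-- The operator `d_{i_1} ∘ ⋯ ∘ d_{i_k}` for a subset `S = {i_1, …, i_k}`. -/
noncomputable def Dop (hcomm : ∀ i j : Fin n, Commute (d i) (d j)) (S : Finset (Fin n)) :
    Module.End F A :=
  S.noncommProd d (fun a _ b _ _ => hcomm a b)

variable (hcomm : ∀ i j : Fin n, Commute (d i) (d j))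

lemma Dop_eq_sorted (S : Finset (Fin n)) :
    Dop hcomm S = ((S.sort (· ≤ ·)).map d).prod := by
  unfold Dop Finset.noncommProd
  apply multiset_noncommProd_eq
  rw [← Finset.sort_eq S (· ≤ ·)]
  rfl

lemma Uop_eq (k : ℕ) :
    Uop d k = ∑ S ∈ powersetCard k (univ : Finset (Fin n)), Dop hcomm S :=
  Finset.sum_congr rfl fun S _ => (Dop_eq_sorted hcomm S).symm

@[simp] lemma Dop_empty : Dop hcomm (∅ : Finset (Fin n)) = 1 :=
  Finset.noncommProd_empty _ _

lemma Dop_insert {i : Fin n} {S : Finset (Fin n)} (h : i ∉ S) :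
    Dop hcomm (insert i S) = d i * Dop hcomm S :=
  Finset.noncommProd_insert_of_notMem _ _ _ _ h

lemma commute_Dop (i : Fin n) (S : Finset (Fin n)) : Commute (d i) (Dop hcomm S) :=
  Finset.noncommProd_commute _ _ _ _ (fun j _ => hcomm i j)

lemma Dop_union {S T : Finset (Fin n)} (h : Disjoint S T) :
    Dop hcomm (S ∪ T) = Dop hcomm S * Dop hcomm T :=
  Finset.noncommProd_union_of_disjoint h _ _

lemma Dop_insert_apply {i : Fin n} {S : Finset (Fin n)} (h : i ∉ S) (a : A) :
    Dop hcomm (insert i S) a = d i (Dop hcomm S a) := by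
  rw [Dop_insert hcomm h]; rfl

lemma Dop_insert_apply' {i : Fin n} {S : Finset (Fin n)} (h : i ∉ S) (a : A) :
    Dop hcomm (insert i S) a = Dop hcomm S (d i a) := by
  rw [Dop_insert hcomm h, (commute_Dop hcomm i S).eq]; rfl

lemma Dop_mem_apply {i : Fin n} {S : Finset (Fin n)} (h : i ∈ S) (a : A) :
    Dop hcomm S a = d i (Dop hcomm (S.erase i) a) := by
  conv_lhs => rw [← Finset.insert_erase h]
  exact Dop_insert_apply hcomm (Finset.notMem_erase _ _) a

lemma Dop_mem_apply' {i : Fin n} {S : Finset (Fin n)} (h : i ∈ S) (a : A) :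
    Dop hcomm S a = Dop hcomm (S.erase i) (d i a) := by
  conv_lhs => rw [← Finset.insert_erase h]
  exact Dop_insert_apply' hcomm (Finset.notMem_erase _ _) a

lemma Dop_mul_Dop_eq_zero (hsq : ∀ i : Fin n, d i * d i = 0)
    {S T : Finset (Fin n)} (h : ¬ Disjoint S T) :
    Dop hcomm S * Dop hcomm T = 0 := by
  obtain ⟨i, hiS, hiT⟩ := Finset.not_disjoint_iff.1 h
  have hS : S = insert i (S.erase i) := (Finset.insert_erase hiS).symm
  have hT : T = insert i (T.erase i) := (Finset.insert_erase hiT).symm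
  rw [hS, hT, Dop_insert hcomm (Finset.notMem_erase _ _),
    Dop_insert hcomm (Finset.notMem_erase _ _)]
  have hc : Commute (d i) (Dop hcomm (S.erase i)) := commute_Dop hcomm i _
  calc d i * Dop hcomm (S.erase i) * (d i * Dop hcomm (T.erase i))
      = d i * (Dop hcomm (S.erase i) * d i) * Dop hcomm (T.erase i) := by
        rw [mul_assoc, mul_assoc, mul_assoc]
    _ = (d i * d i) * (Dop hcomm (S.erase i) * Dop hcomm (T.erase i)) := by
        rw [← hc.eq]; rw [mul_assoc, mul_assoc, mul_assoc]
    _ = 0 := by rw [hsq i, zero_mul]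
set_option linter.unusedSectionVars false
section Ring

variable {F : Type*} {A : Type*} [Field F] [NonUnitalNonAssocRing A] [Module F A]
  [SMulCommClass F A A] [IsScalarTower F A A]
  {n : ℕ} {d : Fin n → Module.End F A}
  (hcomm : ∀ i j : Fin n, Commute (d i) (d j))

lemma elem_zero₁ (hprod : ∀ i : Fin n, ∀ x y : A, (d i x) * (d i y) = 0)
    {P Q : Finset (Fin n)} (h : ¬ Disjoint P Q) (a b : A) :
    (Dop hcomm P a) * (Dop hcomm Q b) = 0 := by
  obtain ⟨i, hiP, hiQ⟩ := Finset.not_disjoint_iff.1 h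
  rw [Dop_mem_apply hcomm hiP, Dop_mem_apply hcomm hiQ, hprod]

lemma elem_zero₃ (hder : ∀ i : Fin n, ∀ x y : A, d i (x * y) = (d i x) * y + x * (d i y))
    (hsq : ∀ i : Fin n, d i * d i = 0)
    (hprod : ∀ i : Fin n, ∀ x y : A, (d i x) * (d i y) = 0)
    {P Q : Finset (Fin n)} (h : ¬ Disjoint P Q) (x a : A) :
    Dop hcomm Q ((Dop hcomm P x) * a) = 0 := by
  obtain ⟨i, hiP, hiQ⟩ := Finset.not_disjoint_iff.1 h
  rw [Dop_mem_apply hcomm hiP, Dop_mem_apply' hcomm hiQ, hder i, hprod i, add_zero]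
  have hz : d i (d i (Dop hcomm (P.erase i) x)) = 0 := by
    have := congrArg (fun f : Module.End F A => f (Dop hcomm (P.erase i) x)) (hsq i)
    simpa [Module.End.mul_apply] using this
  rw [hz, zero_mul, map_zero]

/-- auxiliary set identities -/
private lemma sdiff_insert_insert {i : Fin n} {S P : Finset (Fin n)}
    (hiS : i ∉ S) (hPS : P ⊆ S) :
    insert i S \ insert i P = S \ P := by
  ext j
  simp only [Finset.mem_sdiff, Finset.mem_insert]
  constructor
  · rintro ⟨hj1 | hj1, hj2⟩
    · exact (hj2 (Or.inl hj1)).elim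
    · exact ⟨hj1, fun hjP => hj2 (Or.inr hjP)⟩
  · rintro ⟨hj1, hj2⟩
    refine ⟨Or.inr hj1, ?_⟩
    rintro (rfl | hjP)
    · exact hiS hj1
    · exact hj2 hjP

private lemma insert_sdiff_of_subset {i : Fin n} {S P : Finset (Fin n)}
    (hiS : i ∉ S) (hPS : P ⊆ S) :
    insert i S \ P = insert i (S \ P) := by
  ext j
  simp only [Finset.mem_sdiff, Finset.mem_insert]
  constructor
  · rintro ⟨hj1 | hj1, hj2⟩
    · exact Or.inl hj1
    · exact Or.inr ⟨hj1, hj2⟩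
  · rintro (rfl | ⟨hj1, hj2⟩)
    · exact ⟨Or.inl rfl, fun hjP => hiS (hPS hjP)⟩
    · exact ⟨Or.inr hj1, hj2⟩

private lemma insert_inj_on_powerset {i : Fin n} {S : Finset (Fin n)} (hiS : i ∉ S) :
    ∀ P ∈ S.powerset, ∀ P' ∈ S.powerset, insert i P = insert i P' → P = P' := by
  intro P hP P' hP' h
  have hiP : i ∉ P := fun hh => hiS (Finset.mem_powerset.1 hP hh)
  have hiP' : i ∉ P' := fun hh => hiS (Finset.mem_powerset.1 hP' hh)
  rw [← Finset.erase_insert hiP, ← Finset.erase_insert hiP', h]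

private lemma powerset_disjoint {i : Fin n} {S : Finset (Fin n)} (hiS : i ∉ S) :
    Disjoint S.powerset (S.powerset.image (insert i)) := by
  rw [Finset.disjoint_left]
  intro P hP hP'
  obtain ⟨P', _, rfl⟩ := Finset.mem_image.1 hP'
  exact (fun hh => hiS (Finset.mem_powerset.1 hP hh)) (Finset.mem_insert_self i P')

lemma Dop_leibniz (hder : ∀ i : Fin n, ∀ x y : A, d i (x * y) = (d i x) * y + x * (d i y))
    (S : Finset (Fin n)) (a b : A) :
    Dop hcomm S (a * b) = ∑ P ∈ S.powerset, (Dop hcomm P a) * (Dop hcomm (S \ P) b) := by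
  induction S using Finset.induction_on with
  | empty => simp
  | @insert i S hiS ih =>
    have key : ∀ P ∈ S.powerset,
        d i ((Dop hcomm P a) * (Dop hcomm (S \ P) b))
          = (Dop hcomm (insert i P) a) * (Dop hcomm (insert i S \ insert i P) b)
            + (Dop hcomm P a) * (Dop hcomm (insert i S \ P) b) := by
      intro P hP
      have hPS : P ⊆ S := Finset.mem_powerset.1 hP
      have hiP : i ∉ P := fun hh => hiS (hPS hh)
      have hiSP : i ∉ S \ P := fun hh => hiS (Finset.mem_sdiff.1 hh).1
      rw [hder i, sdiff_insert_insert hiS hPS, insert_sdiff_of_subset hiS hPS,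
        Dop_insert_apply hcomm hiP, Dop_insert_apply hcomm hiSP]
    rw [Dop_insert_apply hcomm hiS, ih, map_sum, Finset.sum_congr rfl key,
      Finset.sum_add_distrib, Finset.powerset_insert,
      Finset.sum_union (powerset_disjoint hiS),
      Finset.sum_image (insert_inj_on_powerset hiS), add_comm]

lemma Dop_right_mul (hder : ∀ i : Fin n, ∀ x y : A, d i (x * y) = (d i x) * y + x * (d i y))
    (S : Finset (Fin n)) (x a : A) :
    x * Dop hcomm S a
      = ∑ P ∈ S.powerset,
          ((-1 : F) ^ P.card) • (Dop hcomm (S \ P) ((Dop hcomm P x) * a)) := by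
  induction S using Finset.induction_on generalizing x with
  | empty => simp
  | @insert i S hiS ih =>
    have hx : x * Dop hcomm (insert i S) a
        = d i (x * Dop hcomm S a) - (d i x) * (Dop hcomm S a) := by
      rw [Dop_insert_apply hcomm hiS, hder i]
      abel
    rw [hx, ih x, ih (d i x), map_sum, Finset.powerset_insert,
      Finset.sum_union (powerset_disjoint hiS),
      Finset.sum_image (insert_inj_on_powerset hiS)]
    have h1 : ∀ P ∈ S.powerset,
        d i (((-1 : F) ^ P.card) • (Dop hcomm (S \ P) ((Dop hcomm P x) * a)))
          = ((-1 : F) ^ P.card) • (Dop hcomm (insert i S \ P) ((Dop hcomm P x) * a)) := by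
      intro P hP
      have hPS : P ⊆ S := Finset.mem_powerset.1 hP
      have hiSP : i ∉ S \ P := fun hh => hiS (Finset.mem_sdiff.1 hh).1
      rw [map_smul, insert_sdiff_of_subset hiS hPS, Dop_insert_apply hcomm hiSP]
    have h2 : ∀ P ∈ S.powerset,
        ((-1 : F) ^ P.card) • (Dop hcomm (S \ P) ((Dop hcomm P (d i x)) * a))
          = -(((-1 : F) ^ (insert i P).card) •
              (Dop hcomm (insert i S \ insert i P) ((Dop hcomm (insert i P) x) * a))) := by
      intro P hP
      have hPS : P ⊆ S := Finset.mem_powerset.1 hP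
      have hiP : i ∉ P := fun hh => hiS (hPS hh)
      rw [sdiff_insert_insert hiS hPS, Dop_insert_apply' hcomm hiP,
        Finset.card_insert_of_notMem hiP, pow_succ, mul_neg_one, neg_smul, neg_neg]
    rw [Finset.sum_congr rfl h1, Finset.sum_congr rfl h2]
    rw [Finset.sum_neg_distrib, sub_neg_eq_add, add_comm]

end Ring
section Key

open Finset

variable {n : ℕ} {M : Type*} [AddCommMonoid M]

lemma key (g : Finset (Fin n) → Finset (Fin n) → M)
    (hg : ∀ P Q, ¬ Disjoint P Q → g P Q = 0) (m : ℕ) :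
    ∑ S ∈ powersetCard m (univ : Finset (Fin n)), ∑ P ∈ S.powerset, g P (S \ P)
      = ∑ i ∈ range (m + 1), ∑ P ∈ powersetCard i (univ : Finset (Fin n)),
          ∑ Q ∈ powersetCard (m - i) (univ : Finset (Fin n)), g P Q := by
  have hR : ∀ i : ℕ,
      ∑ P ∈ powersetCard i (univ : Finset (Fin n)),
          ∑ Q ∈ powersetCard (m - i) (univ : Finset (Fin n)), g P Q
        = ∑ x ∈ (powersetCard i (univ : Finset (Fin n)) ×ˢ
            powersetCard (m - i) (univ : Finset (Fin n))), g x.1 x.2 := by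
    intro i; rw [Finset.sum_product]
  simp only [hR]
  rw [Finset.sum_sigma', Finset.sum_sigma']
  rw [← Finset.sum_filter_of_ne
    (p := fun x : Σ _ : ℕ, Finset (Fin n) × Finset (Fin n) => Disjoint x.2.1 x.2.2)
    (fun x _ h0 => by by_contra hnd; exact h0 (hg _ _ hnd))]
  refine Finset.sum_nbij' (fun x => ⟨x.2.card, (x.2, x.1 \ x.2)⟩)
    (fun y => ⟨y.2.1 ∪ y.2.2, y.2.1⟩) ?_ ?_ ?_ ?_ ?_
  · rintro ⟨S, P⟩ hx
    simp only [Finset.mem_sigma, Finset.mem_powersetCard_univ, Finset.mem_powerset] at hx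
    obtain ⟨hS, hP⟩ := hx
    have hle : P.card ≤ m := hS ▸ Finset.card_le_card hP
    exact Finset.mem_filter.2 ⟨Finset.mem_sigma.2 ⟨Finset.mem_range.2
      (Nat.lt_succ_of_le hle), Finset.mem_product.2 ⟨Finset.mem_powersetCard_univ.2 rfl,
      Finset.mem_powersetCard_univ.2 (by rw [Finset.card_sdiff_of_subset hP, hS])⟩⟩,
      Finset.disjoint_sdiff⟩
  · rintro ⟨i, P, Q⟩ hy
    simp only [Finset.mem_filter, Finset.mem_sigma, Finset.mem_range, Finset.mem_product,
      Finset.mem_powersetCard_univ] at hy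
    obtain ⟨⟨hi, hP, hQ⟩, hd⟩ := hy
    simp only [Finset.mem_sigma, Finset.mem_powersetCard_univ, Finset.mem_powerset]
    refine ⟨?_, Finset.subset_union_left⟩
    rw [Finset.card_union_of_disjoint hd, hP, hQ]
    exact Nat.add_sub_cancel' (Nat.lt_succ_iff.1 hi)
  · rintro ⟨S, P⟩ hx
    simp only [Finset.mem_sigma, Finset.mem_powersetCard_univ, Finset.mem_powerset] at hx
    have : P ∪ S \ P = S := Finset.union_sdiff_of_subset hx.2
    simp only [this]
  · rintro ⟨i, P, Q⟩ hy
    simp only [Finset.mem_filter, Finset.mem_sigma, Finset.mem_range, Finset.mem_product,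
      Finset.mem_powersetCard_univ] at hy
    obtain ⟨⟨hi, hP, hQ⟩, hd⟩ := hy
    have h1 : (P ∪ Q) \ P = Q := Finset.union_sdiff_cancel_left hd
    simp only [h1, hP]
  · rintro ⟨S, P⟩ _
    rfl

lemma key' (g : Finset (Fin n) → Finset (Fin n) → M)
    (hg : ∀ P Q, ¬ Disjoint P Q → g P Q = 0) :
    ∑ S : Finset (Fin n), ∑ P ∈ S.powerset, g P (S \ P)
      = ∑ P : Finset (Fin n), ∑ Q : Finset (Fin n), g P Q := by
  have hR : ∑ P : Finset (Fin n), ∑ Q : Finset (Fin n), g P Q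
      = ∑ x ∈ (univ : Finset (Finset (Fin n))) ×ˢ (univ : Finset (Finset (Fin n))),
          g x.1 x.2 := by rw [Finset.sum_product]
  rw [hR, Finset.sum_sigma']
  rw [← Finset.sum_filter_of_ne
    (p := fun x : Finset (Fin n) × Finset (Fin n) => Disjoint x.1 x.2)
    (fun x _ h0 => by by_contra hnd; exact h0 (hg _ _ hnd))]
  refine Finset.sum_nbij' (fun x => (x.2, x.1 \ x.2)) (fun y => ⟨y.1 ∪ y.2, y.1⟩)
    ?_ ?_ ?_ ?_ ?_
  · rintro ⟨S, P⟩ hx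
    simp only [Finset.mem_sigma, Finset.mem_powerset] at hx
    simp only [Finset.mem_filter, Finset.mem_product, Finset.mem_univ, true_and]
    exact Finset.disjoint_sdiff
  · rintro ⟨P, Q⟩ _
    simp only [Finset.mem_sigma, Finset.mem_univ, Finset.mem_powerset, true_and]
    exact Finset.subset_union_left
  · rintro ⟨S, P⟩ hx
    simp only [Finset.mem_sigma, Finset.mem_univ, Finset.mem_powerset, true_and] at hx
    have : P ∪ S \ P = S := Finset.union_sdiff_of_subset hx
    simp only [this]
  · rintro ⟨P, Q⟩ hy
    simp only [Finset.mem_filter, Finset.mem_product] at hy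
    have h1 : (P ∪ Q) \ P = Q := Finset.union_sdiff_cancel_left hy.2
    simp only [h1]
  · rintro ⟨S, P⟩ _
    rfl

end Key
section Eprod

open Finset

variable {F : Type*} {A : Type*} [Field F] [AddCommGroup A] [Module F A]
  {n : ℕ} {d : Fin n → Module.End F A}

lemma comm1 (hcomm : ∀ i j : Fin n, Commute (d i) (d j)) (i j : Fin n) : Commute ((1 : Module.End F A) + d i) (1 + d j) :=
  Commute.add_left (Commute.one_left _) ((Commute.one_right _).add_right (hcomm i j))

lemma noncommProd_one_add (hcomm : ∀ i j : Fin n, Commute (d i) (d j)) (s : Finset (Fin n)) :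
    s.noncommProd (fun i => 1 + d i) (fun a _ b _ _ => comm1 hcomm a b)
      = ∑ S ∈ s.powerset, Dop hcomm S := by
  induction s using Finset.induction_on with
  | empty => simp; rfl
  | @insert i s hi ih =>
    erw [Finset.noncommProd_insert_of_notMem _ _ _ _ hi, ih, add_mul, one_mul,
      Finset.mul_sum, Finset.powerset_insert, Finset.sum_union (powerset_disjoint hi),
      Finset.sum_image (insert_inj_on_powerset hi)]
    congr 1
    refine Finset.sum_congr rfl fun S hS => ?_
    have hiS : i ∉ S := fun hh => hi (Finset.mem_powerset.1 hS hh)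
    rw [Dop_insert hcomm hiS]

lemma isUnit_one_add (hsq : ∀ i : Fin n, d i * d i = 0) (i : Fin n) :
    IsUnit ((1 : Module.End F A) + d i) := by
  refine ⟨⟨1 + d i, 1 - d i, ?_, ?_⟩, rfl⟩
  · rw [mul_sub, mul_one, add_mul, one_mul, hsq i, add_zero, add_sub_cancel_right]
  · rw [sub_mul, one_mul, mul_add, mul_one, hsq i, add_zero, add_sub_cancel_right]

lemma isUnit_noncommProd (hcomm : ∀ i j : Fin n, Commute (d i) (d j)) (hsq : ∀ i : Fin n, d i * d i = 0) (s : Finset (Fin n)) :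
    IsUnit (s.noncommProd (fun i => 1 + d i) (fun a _ b _ _ => comm1 hcomm a b)) := by
  induction s using Finset.induction_on with
  | empty => exact isUnit_one
  | @insert i s hi ih =>
    erw [Finset.noncommProd_insert_of_notMem _ _ _ _ hi]
    exact (isUnit_one_add hsq i).mul ih

end Eprod
end UopAux
set_option maxHeartbeats 1000000 in
/-- Basic properties of the divided-power operators `U_k` built from commuting square-zero
derivations `d_1, …, d_n` of a (not necessarily associative) algebra `A` with
`(x·d_i)(y·d_i) = 0`. -/
theorem Uop_properties
    {F : Type*} {A : Type*} [Field F] [NonUnitalNonAssocRing A] [Module F A]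
    [SMulCommClass F A A] [IsScalarTower F A A]
    {n : ℕ} (d : Fin n → Module.End F A)
    (hder : ∀ i : Fin n, ∀ x y : A, d i (x * y) = (d i x) * y + x * (d i y))
    (hcomm : ∀ i j : Fin n, Commute (d i) (d j))
    (hsq : ∀ i : Fin n, d i * d i = 0)
    (hprod : ∀ i : Fin n, ∀ x y : A, (d i x) * (d i y) = 0) :
    (∀ (a b : A) (m : ℕ),
        Uop d m (a * b) = ∑ i ∈ Finset.range (m + 1), (Uop d i a) * (Uop d (m - i) b)) ∧
    (Function.Bijective (fun a : A => ∑ i ∈ Finset.range (n + 1), Uop d i a) ∧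
      ∀ a b : A, (∑ i ∈ Finset.range (n + 1), Uop d i (a * b)) =
        (∑ i ∈ Finset.range (n + 1), Uop d i a) * (∑ i ∈ Finset.range (n + 1), Uop d i b)) ∧
    (∀ (a x : A) (m : ℕ),
        x * (Uop d m a) =
          ∑ i ∈ Finset.range (m + 1), ((-1 : F) ^ i) • (Uop d (m - i)) ((Uop d i x) * a)) ∧
    (∀ i j : ℕ, Uop d i * Uop d j = ((i + j).choose i) • Uop d (i + j)) := by
  classical
  have hUe : ∀ k, Uop d k
      = ∑ S ∈ Finset.powersetCard k (Finset.univ : Finset (Fin n)), UopAux.Dop hcomm S :=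
    UopAux.Uop_eq hcomm
  have hUa : ∀ (k) (a : A), Uop d k a
      = ∑ S ∈ Finset.powersetCard k (Finset.univ : Finset (Fin n)), UopAux.Dop hcomm S a := by
    intro k a; rw [hUe k, LinearMap.sum_apply]
  -- Part 1
  have part1 : ∀ (a b : A) (m : ℕ),
      Uop d m (a * b) = ∑ i ∈ Finset.range (m + 1), (Uop d i a) * (Uop d (m - i) b) := by
    intro a b m
    rw [hUa]
    calc ∑ S ∈ Finset.powersetCard m Finset.univ, UopAux.Dop hcomm S (a * b)
        = ∑ S ∈ Finset.powersetCard m Finset.univ, ∑ P ∈ S.powerset,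
            (UopAux.Dop hcomm P a) * (UopAux.Dop hcomm (S \ P) b) :=
          Finset.sum_congr rfl fun S _ => UopAux.Dop_leibniz hcomm hder S a b
      _ = ∑ i ∈ Finset.range (m + 1), ∑ P ∈ Finset.powersetCard i Finset.univ,
            ∑ Q ∈ Finset.powersetCard (m - i) Finset.univ,
            (UopAux.Dop hcomm P a) * (UopAux.Dop hcomm Q b) :=
          UopAux.key (fun P Q => (UopAux.Dop hcomm P a) * (UopAux.Dop hcomm Q b))
            (fun P Q h => UopAux.elem_zero₁ hcomm hprod h a b) m
      _ = ∑ i ∈ Finset.range (m + 1), (Uop d i a) * (Uop d (m - i) b) := by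
          refine Finset.sum_congr rfl fun i _ => ?_
          rw [hUa, hUa, Finset.sum_mul_sum]
  refine ⟨part1, ⟨?_, ?_⟩, ?_, ?_⟩
  · -- bijectivity
    have hEop : (∑ i ∈ Finset.range (n + 1), Uop d i)
        = Finset.univ.noncommProd (fun i => 1 + d i)
            (fun a _ b _ _ => UopAux.comm1 hcomm a b) := by
      rw [UopAux.noncommProd_one_add hcomm]
      have : (Finset.univ : Finset (Fin n)).card = n := by
        rw [Finset.card_univ, Fintype.card_fin]
      rw [Finset.sum_powerset, this]
      exact (Finset.sum_congr rfl fun k _ => (hUe k).symm).symm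
    have hfun : (fun a : A => ∑ i ∈ Finset.range (n + 1), Uop d i a)
        = ⇑(∑ i ∈ Finset.range (n + 1), Uop d i) := by
      funext a; rw [LinearMap.sum_apply]
    rw [hfun, hEop]
    exact (Module.End.isUnit_iff _).1 (UopAux.isUnit_noncommProd hcomm hsq _)
  · -- multiplicativity
    intro a b
    have hsum : ∀ c : A, ∑ i ∈ Finset.range (n + 1), Uop d i c
        = ∑ S : Finset (Fin n), UopAux.Dop hcomm S c := by
      intro c
      have h1 : ∑ S : Finset (Fin n), UopAux.Dop hcomm S c
          = ∑ S ∈ (Finset.univ : Finset (Fin n)).powerset, UopAux.Dop hcomm S c := by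
        rw [Finset.powerset_univ]
      have h2 : (Finset.univ : Finset (Fin n)).card = n := by
        rw [Finset.card_univ, Fintype.card_fin]
      rw [h1, Finset.sum_powerset, h2]
      exact (Finset.sum_congr rfl fun k _ => (hUa k c).symm).symm
    rw [hsum, hsum, hsum]
    calc ∑ S : Finset (Fin n), UopAux.Dop hcomm S (a * b)
        = ∑ S : Finset (Fin n), ∑ P ∈ S.powerset,
            (UopAux.Dop hcomm P a) * (UopAux.Dop hcomm (S \ P) b) :=
          Finset.sum_congr rfl fun S _ => UopAux.Dop_leibniz hcomm hder S a b
      _ = ∑ P : Finset (Fin n), ∑ Q : Finset (Fin n),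
            (UopAux.Dop hcomm P a) * (UopAux.Dop hcomm Q b) :=
          UopAux.key' (fun P Q => (UopAux.Dop hcomm P a) * (UopAux.Dop hcomm Q b))
            (fun P Q h => UopAux.elem_zero₁ hcomm hprod h a b)
      _ = (∑ P : Finset (Fin n), UopAux.Dop hcomm P a)
            * (∑ Q : Finset (Fin n), UopAux.Dop hcomm Q b) :=
          (Finset.sum_mul_sum _ _ _ _).symm
  · -- Part 3
    intro a x m
    rw [hUa, Finset.mul_sum]
    calc ∑ S ∈ Finset.powersetCard m Finset.univ, x * UopAux.Dop hcomm S a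
        = ∑ S ∈ Finset.powersetCard m Finset.univ, ∑ P ∈ S.powerset,
            ((-1 : F) ^ P.card) • (UopAux.Dop hcomm (S \ P) ((UopAux.Dop hcomm P x) * a)) :=
          Finset.sum_congr rfl fun S _ => UopAux.Dop_right_mul hcomm hder S x a
      _ = ∑ i ∈ Finset.range (m + 1), ∑ P ∈ Finset.powersetCard i Finset.univ,
            ∑ Q ∈ Finset.powersetCard (m - i) Finset.univ,
            ((-1 : F) ^ P.card) • (UopAux.Dop hcomm Q ((UopAux.Dop hcomm P x) * a)) :=
          UopAux.key (fun P Q =>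
              ((-1 : F) ^ P.card) • (UopAux.Dop hcomm Q ((UopAux.Dop hcomm P x) * a)))
            (fun P Q h => by
              rw [UopAux.elem_zero₃ hcomm hder hsq hprod h, smul_zero]) m
      _ = ∑ i ∈ Finset.range (m + 1),
            ((-1 : F) ^ i) • (Uop d (m - i)) ((Uop d i x) * a) := by
          refine Finset.sum_congr rfl fun i _ => ?_
          rw [hUa i x, Finset.sum_mul, hUa (m - i)]
          simp_rw [map_sum, Finset.smul_sum]
          rw [Finset.sum_comm]
          refine Finset.sum_congr rfl fun P _ => Finset.sum_congr rfl fun Q hQ => ?_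
          rw [Finset.mem_powersetCard_univ.1 hQ]
  · -- Part 4
    intro i j
    have hkey := UopAux.key (n := n)
      (g := fun S T => if S.card = i then UopAux.Dop hcomm S * UopAux.Dop hcomm T else 0)
      (fun P Q h => by
        split_ifs
        · exact UopAux.Dop_mul_Dop_eq_zero hcomm hsq h
        · rfl) (i + j)
    have hR : ∑ k ∈ Finset.range (i + j + 1), ∑ P ∈ Finset.powersetCard k Finset.univ,
        ∑ Q ∈ Finset.powersetCard (i + j - k) Finset.univ,
          (if P.card = i then UopAux.Dop hcomm P * UopAux.Dop hcomm Q else 0)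
        = ∑ P ∈ Finset.powersetCard i (Finset.univ : Finset (Fin n)),
            ∑ Q ∈ Finset.powersetCard j (Finset.univ : Finset (Fin n)),
              UopAux.Dop hcomm P * UopAux.Dop hcomm Q := by
      rw [Finset.sum_eq_single i]
      · have hj : i + j - i = j := by omega
        rw [hj]
        refine Finset.sum_congr rfl fun P hP => Finset.sum_congr rfl fun Q _ => ?_
        rw [if_pos (Finset.mem_powersetCard_univ.1 hP)]
      · intro k _ hne
        refine Finset.sum_eq_zero fun P hP => Finset.sum_eq_zero fun Q _ => ?_
        rw [if_neg]
        rw [Finset.mem_powersetCard_univ.1 hP]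
        exact hne
      · intro h
        exact absurd (Finset.mem_range.2 (by omega)) h
    have hL : ∑ S ∈ Finset.powersetCard (i + j) (Finset.univ : Finset (Fin n)),
        ∑ P ∈ S.powerset,
          (if P.card = i then UopAux.Dop hcomm P * UopAux.Dop hcomm (S \ P) else 0)
        = ((i + j).choose i)
            • ∑ S ∈ Finset.powersetCard (i + j) (Finset.univ : Finset (Fin n)),
                UopAux.Dop hcomm S := by
      rw [Finset.smul_sum]
      refine Finset.sum_congr rfl fun S hS => ?_
      have hcard : S.card = i + j := Finset.mem_powersetCard_univ.1 hS
      rw [← Finset.sum_filter, ← Finset.powersetCard_eq_filter]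
      have hterm : ∀ P ∈ Finset.powersetCard i S,
          UopAux.Dop hcomm P * UopAux.Dop hcomm (S \ P) = UopAux.Dop hcomm S := by
        intro P hP
        obtain ⟨hPS, _⟩ := Finset.mem_powersetCard.1 hP
        rw [← UopAux.Dop_union hcomm Finset.disjoint_sdiff, Finset.union_sdiff_of_subset hPS]
      rw [Finset.sum_congr rfl hterm, Finset.sum_const, Finset.card_powersetCard, hcard]
    rw [hUe i, hUe j, hUe (i + j), Finset.sum_mul_sum, ← hR, ← hkey, hL]
end

section
/- Let L be a Lie algebra over a field F and let d_1, …, d_n be derivations of L such that d_i ∘ d_j = d_j ∘ d_i for all i, j, d_i ∘ d_i = 0 for all i, and ⁅x·d_i, y·d_i⁆ = 0 for all x, y ∈ L and all i. Let U_k = U_k(d_1, …, d_n), let m ≥ 1, and suppose U_k = 0 for all k ≥ m. Then: (1) if m ≥ 2, then ⁅a U_{m−1}, b U_{m−1}⁆ = 0 for arbitrary a, b ∈ L; (2) if m ≥ 4, then for any k ≥ m − 1 and arbitrary elements a_1, …, a_k ∈ L one has ad(a_1 U_{m−1}) ∘ ad(a_2 U_{m−1}) ∘ ⋯ ∘ ad(a_k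 U_{m−1}) = 0 as an operator on L. -/
open Finset

section Aux
variable {F L : Type*} [Field F] [LieRing L] [LieAlgebra F L]
  {n : ℕ} (d : Fin n → Module.End F L)

/-- product of the derivations indexed by a finset -/
noncomputable def dP (S : Finset (Fin n)) : Module.End F L :=
  ((S.sort (· ≤ ·)).map d).prod

/-- relative divided power operators -/
noncomputable def Ua (E : Finset (Fin n)) (k : ℕ) : Module.End F L :=
  ∑ S ∈ Finset.powersetCard k E, dP d S

lemma dP_empty : dP d ∅ = 1 := by simp [dP]

lemma pairwise_commute (hcomm : ∀ i j : Fin n, Commute (d i) (d j)) (l : List (Fin n)) :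
    (l.map d).Pairwise Commute := by
  induction l with
  | nil => simp
  | cons a l ih =>
    simp only [List.map_cons, List.pairwise_cons]
    exact ⟨by rintro x hx; obtain ⟨j, -, rfl⟩ := List.mem_map.1 hx; exact hcomm a j, ih⟩

lemma dP_insert (hcomm : ∀ i j : Fin n, Commute (d i) (d j))
    {i : Fin n} {S : Finset (Fin n)} (hi : i ∉ S) :
    dP d (insert i S) = d i * dP d S := by
  have hperm : List.Perm ((insert i S).sort (· ≤ ·)) (i :: S.sort (· ≤ ·)) := by
    rw [← Multiset.coe_eq_coe, Finset.sort_eq, Finset.insert_val_of_notMem hi]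
    rw [show ((i :: S.sort (· ≤ ·) : List (Fin n)) : Multiset (Fin n))
        = i ::ₘ (S.sort (· ≤ ·) : List (Fin n)) from rfl, Finset.sort_eq]
  have := (hperm.map d).prod_eq' (pairwise_commute d hcomm _)
  simpa [dP] using this

lemma commute_dP (hcomm : ∀ i j : Fin n, Commute (d i) (d j)) (i : Fin n) (S : Finset (Fin n)) :
    Commute (d i) (dP d S) := by
  apply Commute.list_prod_right
  rintro x hx
  obtain ⟨j, -, rfl⟩ := List.mem_map.1 hx
  exact hcomm i j

lemma commute_Ua (hcomm : ∀ i j : Fin n, Commute (d i) (d j)) (i : Fin n) (E : Finset (Fin n))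
    (k : ℕ) : Commute (d i) (Ua d E k) :=
  Commute.sum_right _ _ _ fun S _ => commute_dP d hcomm i S

lemma Ua_zero (E : Finset (Fin n)) : Ua d E 0 = 1 := by
  simp [Ua, Finset.powersetCard_zero, dP_empty]

lemma Ua_empty {k : ℕ} (hk : k ≠ 0) : Ua d ∅ k = 0 := by
  rw [Ua, Finset.powersetCard_eq_empty.2 (by simpa using Nat.pos_of_ne_zero hk), Finset.sum_empty]

lemma Ua_insert (hcomm : ∀ i j : Fin n, Commute (d i) (d j))
    {i : Fin n} {E : Finset (Fin n)} (hi : i ∉ E) (k : ℕ) :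
    Ua d (insert i E) (k + 1) = Ua d E (k + 1) + d i * Ua d E k := by
  rw [Ua, Finset.powersetCard_succ_insert hi, Finset.sum_union, Finset.sum_image]
  · rw [Ua, Ua, Finset.mul_sum]
    congr 1
    apply Finset.sum_congr rfl
    intro S hS
    have hiS : i ∉ S := fun h => hi (Finset.mem_powersetCard.1 hS |>.1 h)
    exact dP_insert d hcomm hiS
  · intro S hS T hT hST
    have hiS : i ∉ S := fun h => hi (Finset.mem_powersetCard.1 hS |>.1 h)
    have hiT : i ∉ T := fun h => hi (Finset.mem_powersetCard.1 hT |>.1 h)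
    rw [← Finset.erase_insert hiS, ← Finset.erase_insert hiT, hST]
  · rw [Finset.disjoint_right]
    rintro S hS hS'
    obtain ⟨T, hT, rfl⟩ := Finset.mem_image.1 hS
    have : i ∈ (insert i T : Finset (Fin n)) := Finset.mem_insert_self _ _
    exact hi ((Finset.mem_powersetCard.1 hS').1 this)

end Aux

section Main
variable {F L : Type*} [Field F] [LieRing L] [LieAlgebra F L]
  {n : ℕ} (d : Fin n → Module.End F L)
  (hder : ∀ i : Fin n, ∀ x y : L, d i ⁅x, y⁆ = ⁅d i x, y⁆ + ⁅x, d i y⁆)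
  (hcomm : ∀ i j : Fin n, Commute (d i) (d j))
  (hsq : ∀ i : Fin n, d i * d i = 0)
  (hbr : ∀ i : Fin n, ∀ x y : L, ⁅d i x, d i y⁆ = 0)

include hder hcomm hbr in
/-- the Leibniz identity for the divided-power operators -/
lemma M1 (E : Finset (Fin n)) : ∀ (N : ℕ) (x y : L),
    Ua d E N ⁅x, y⁆ = ∑ pq ∈ Finset.HasAntidiagonal.antidiagonal N, ⁅Ua d E pq.1 x, Ua d E pq.2 y⁆ := by
  induction E using Finset.induction_on with
  | empty =>
    intro N x y
    cases N with
    | zero => simp [Ua_zero]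
    | succ M =>
      rw [Ua_empty d (Nat.succ_ne_zero M), LinearMap.zero_apply]
      symm
      apply Finset.sum_eq_zero
      rintro ⟨p, q⟩ hpq
      have hpq' : p + q = M + 1 := Finset.HasAntidiagonal.mem_antidiagonal.1 hpq
      rcases Nat.eq_zero_or_pos p with hp | hp
      · have hq : q ≠ 0 := by omega
        rw [Ua_empty d hq, LinearMap.zero_apply, lie_zero]
      · rw [Ua_empty d (Nat.pos_iff_ne_zero.1 hp), LinearMap.zero_apply, zero_lie]
  | @insert i E hi IH =>
    intro N x y
    set g : ℕ → Module.End F L := Ua d E with hg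
    set h : ℕ → Module.End F L := fun p => Ua d (insert i E) p - g p with hh
    have h0 : h 0 = 0 := by simp [hh, hg, Ua_zero]
    have hs : ∀ p, h (p + 1) = d i * g p := by
      intro p
      rw [hh]
      simp only []
      rw [Ua_insert d hcomm hi, hg]
      abel
    have hU' : ∀ p, Ua d (insert i E) p = g p + h p := by
      intro p; simp [hh]
    have hbr' : ∀ p q, ⁅h p x, h q y⁆ = 0 := by
      intro p q
      cases p with
      | zero => simp [h0]
      | succ p =>
        cases q with
        | zero => simp [h0]
        | succ q =>
          rw [hs, hs, Module.End.mul_apply, Module.End.mul_apply]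
          exact hbr i _ _
    cases N with
    | zero => simp [Ua_zero]
    | succ M =>
      calc Ua d (insert i E) (M + 1) ⁅x, y⁆
          = g (M + 1) ⁅x, y⁆ + d i (g M ⁅x, y⁆) := by
            rw [Ua_insert d hcomm hi, LinearMap.add_apply, Module.End.mul_apply]
        _ = (∑ pq ∈ Finset.HasAntidiagonal.antidiagonal (M + 1), ⁅g pq.1 x, g pq.2 y⁆)
            + ((∑ pq ∈ Finset.HasAntidiagonal.antidiagonal M, ⁅d i (g pq.1 x), g pq.2 y⁆)
             + (∑ pq ∈ Finset.HasAntidiagonal.antidiagonal M, ⁅g pq.1 x, d i (g pq.2 y)⁆)) := by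
            rw [IH, IH, map_sum, ← Finset.sum_add_distrib]
            congr 1
            apply Finset.sum_congr rfl
            intro pq _
            exact hder i _ _
        _ = ∑ pq ∈ Finset.HasAntidiagonal.antidiagonal (M + 1),
              ⁅Ua d (insert i E) pq.1 x, Ua d (insert i E) pq.2 y⁆ := by
            have expand : ∀ pq ∈ Finset.HasAntidiagonal.antidiagonal (M+1),
                ⁅(Ua d (insert i E) pq.1) x, (Ua d (insert i E) pq.2) y⁆
                = (⁅g pq.1 x, g pq.2 y⁆ + ⁅g pq.1 x, h pq.2 y⁆)
                  + (⁅h pq.1 x, g pq.2 y⁆ + ⁅h pq.1 x, h pq.2 y⁆) := by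
              intro pq _
              rw [hU', hU', LinearMap.add_apply, LinearMap.add_apply, add_lie, lie_add, lie_add]
            rw [Finset.sum_congr rfl expand, Finset.sum_add_distrib,
              Finset.sum_add_distrib, Finset.sum_add_distrib]
            have e4 : ∑ pq ∈ Finset.HasAntidiagonal.antidiagonal (M+1), ⁅h pq.1 x, h pq.2 y⁆ = 0 :=
              Finset.sum_eq_zero fun pq _ => hbr' _ _
            have e2 : ∑ pq ∈ Finset.HasAntidiagonal.antidiagonal (M+1), ⁅h pq.1 x, g pq.2 y⁆
                = ∑ pq ∈ Finset.HasAntidiagonal.antidiagonal M, ⁅d i (g pq.1 x), g pq.2 y⁆ := by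
              rw [Finset.Nat.sum_antidiagonal_succ]
              simp only [h0, LinearMap.zero_apply, zero_lie, zero_add]
              apply Finset.sum_congr rfl
              intro pq _
              rw [hs, Module.End.mul_apply]
            have e3 : ∑ pq ∈ Finset.HasAntidiagonal.antidiagonal (M+1), ⁅g pq.1 x, h pq.2 y⁆
                = ∑ pq ∈ Finset.HasAntidiagonal.antidiagonal M, ⁅g pq.1 x, d i (g pq.2 y)⁆ := by
              rw [Finset.Nat.sum_antidiagonal_succ']
              simp only [h0, LinearMap.zero_apply, lie_zero, zero_add]
              apply Finset.sum_congr rfl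
              intro pq _
              rw [hs, Module.End.mul_apply]
            rw [e2, e3, e4, add_zero]
            abel

include hcomm hsq in
/-- the alternating inverse identity -/
lemma M2 (E : Finset (Fin n)) : ∀ N : ℕ,
    ∑ pq ∈ Finset.HasAntidiagonal.antidiagonal N, ((-1 : ℤ) ^ pq.2) • (Ua d E pq.1 * Ua d E pq.2)
      = if N = 0 then 1 else 0 := by
  induction E using Finset.induction_on with
  | empty =>
    intro N
    cases N with
    | zero => simp [Ua_zero]
    | succ M =>
      rw [if_neg (Nat.succ_ne_zero M)]
      apply Finset.sum_eq_zero
      rintro ⟨p, q⟩ hpq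
      have hpq' : p + q = M + 1 := Finset.HasAntidiagonal.mem_antidiagonal.1 hpq
      rcases Nat.eq_zero_or_pos p with hp | hp
      · have hq : q ≠ 0 := by omega
        rw [Ua_empty d hq, mul_zero, smul_zero]
      · rw [Ua_empty d (Nat.pos_iff_ne_zero.1 hp), zero_mul, smul_zero]
  | @insert i E hi IH =>
    intro N
    set g : ℕ → Module.End F L := Ua d E with hg
    set h : ℕ → Module.End F L := fun p => Ua d (insert i E) p - g p with hh
    have h0 : h 0 = 0 := by simp [hh, hg, Ua_zero]
    have hs : ∀ p, h (p + 1) = d i * g p := by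
      intro p
      rw [hh]
      simp only []
      rw [Ua_insert d hcomm hi, hg]
      abel
    have hU' : ∀ p, Ua d (insert i E) p = g p + h p := by
      intro p; simp [hh]
    have hcg : ∀ p, d i * g p = g p * d i := fun p => commute_Ua d hcomm i E p
    have hhh : ∀ p q, h p * h q = 0 := by
      intro p q
      cases p with
      | zero => rw [h0, zero_mul]
      | succ p =>
        cases q with
        | zero => rw [h0, mul_zero]
        | succ q =>
          rw [hs, hs, mul_assoc, ← mul_assoc (g p), ← hcg, ← mul_assoc, ← mul_assoc,
            hsq i, zero_mul, zero_mul]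
    cases N with
    | zero => simp [Ua_zero]
    | succ M =>
      have expand : ∀ pq ∈ Finset.HasAntidiagonal.antidiagonal (M+1),
          ((-1 : ℤ) ^ pq.2) • (Ua d (insert i E) pq.1 * Ua d (insert i E) pq.2)
          = (((-1 : ℤ) ^ pq.2) • (g pq.1 * g pq.2) + ((-1 : ℤ) ^ pq.2) • (g pq.1 * h pq.2))
            + (((-1 : ℤ) ^ pq.2) • (h pq.1 * g pq.2)
              + ((-1 : ℤ) ^ pq.2) • (h pq.1 * h pq.2)) := by
        intro pq _
        rw [hU', hU', add_mul, mul_add, mul_add, smul_add, smul_add, smul_add]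
      rw [Finset.sum_congr rfl expand, Finset.sum_add_distrib, Finset.sum_add_distrib,
        Finset.sum_add_distrib]
      have e4 : ∑ pq ∈ Finset.HasAntidiagonal.antidiagonal (M+1), ((-1:ℤ) ^ pq.2) • (h pq.1 * h pq.2) = 0 :=
        Finset.sum_eq_zero fun pq _ => by rw [hhh, smul_zero]
      have e3 : ∑ pq ∈ Finset.HasAntidiagonal.antidiagonal (M+1), ((-1:ℤ) ^ pq.2) • (h pq.1 * g pq.2)
          = d i * ∑ pq ∈ Finset.HasAntidiagonal.antidiagonal M, ((-1:ℤ) ^ pq.2) • (g pq.1 * g pq.2) := by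
        rw [Finset.Nat.sum_antidiagonal_succ, Finset.mul_sum]
        simp only [h0, zero_mul, smul_zero, zero_add]
        apply Finset.sum_congr rfl
        intro pq _
        rw [hs, mul_assoc, mul_smul_comm]
      have e2 : ∑ pq ∈ Finset.HasAntidiagonal.antidiagonal (M+1), ((-1:ℤ) ^ pq.2) • (g pq.1 * h pq.2)
          = -(d i * ∑ pq ∈ Finset.HasAntidiagonal.antidiagonal M, ((-1:ℤ) ^ pq.2) • (g pq.1 * g pq.2)) := by
        rw [Finset.Nat.sum_antidiagonal_succ', Finset.mul_sum]
        simp only [h0, mul_zero, smul_zero, zero_add]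
        rw [← Finset.sum_neg_distrib]
        apply Finset.sum_congr rfl
        intro pq _
        rw [hs, pow_succ, ← mul_assoc (g pq.1), ← hcg, mul_assoc, mul_smul_comm]
        simp [mul_comm]
      rw [e2, e3, e4, add_zero, IH]
      rw [if_neg (Nat.succ_ne_zero M)]
      abel

end Main


/-- The linearized Kostrikin lemma: if `d_1, …, d_n` are commuting square-zero derivations of a
Lie algebra `L` with `⁅x d_i, y d_i⁆ = 0`, and `U_k = 0` for all `k ≥ m`, then
(1) for `m ≥ 2`, `⁅aU_{m-1}, bU_{m-1}⁆ = 0`, and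
(2) for `m ≥ 4`, any composition of at least `m - 1` operators `ad(a_j U_{m-1})` vanishes. -/
theorem linearized_kostrikin
    {F : Type*} {L : Type*} [Field F] [LieRing L] [LieAlgebra F L]
    {n : ℕ} (d : Fin n → Module.End F L)
    (hder : ∀ i : Fin n, ∀ x y : L, d i ⁅x, y⁆ = ⁅d i x, y⁆ + ⁅x, d i y⁆)
    (hcomm : ∀ i j : Fin n, Commute (d i) (d j))
    (hsq : ∀ i : Fin n, d i * d i = 0)
    (hbr : ∀ i : Fin n, ∀ x y : L, ⁅d i x, d i y⁆ = 0)
    (m : ℕ) (hm : 1 ≤ m) (hU : ∀ k : ℕ, m ≤ k → Uop d k = 0) :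
    (2 ≤ m → ∀ a b : L, ⁅Uop d (m - 1) a, Uop d (m - 1) b⁆ = 0) ∧
    (4 ≤ m → ∀ k : ℕ, m - 1 ≤ k → ∀ a : ℕ → L,
      (List.ofFn fun j : Fin k => LieAlgebra.ad F L (Uop d (m - 1) (a j))).prod = 0) := by
  have hUa : ∀ k : ℕ, Ua d Finset.univ k = Uop d k := fun k => rfl
  have hM1 : ∀ (N : ℕ) (x y : L),
      Uop d N ⁅x, y⁆ = ∑ pq ∈ Finset.HasAntidiagonal.antidiagonal N, ⁅Uop d pq.1 x, Uop d pq.2 y⁆ := by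
    intro N x y
    simpa only [hUa] using M1 d hder hcomm hbr Finset.univ N x y
  have hM2 : ∀ N : ℕ,
      ∑ pq ∈ Finset.HasAntidiagonal.antidiagonal N, ((-1 : ℤ) ^ pq.2) • (Uop d pq.1 * Uop d pq.2)
        = if N = 0 then 1 else 0 := by
    intro N
    simpa only [hUa] using M2 d hcomm hsq Finset.univ N
  constructor
  · -- part 1
    intro h2 a b
    have h0 : Uop d ((m-1) + (m-1)) ⁅a, b⁆ = 0 := by
      rw [hU ((m-1)+(m-1)) (by omega), LinearMap.zero_apply]
    rw [hM1] at h0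
    rw [← h0]
    symm
    apply Finset.sum_eq_single_of_mem ((m-1, m-1) : ℕ × ℕ)
    · exact Finset.HasAntidiagonal.mem_antidiagonal.2 rfl
    · rintro ⟨p, q⟩ hpq hne
      have hpq' : p + q = (m-1) + (m-1) := Finset.HasAntidiagonal.mem_antidiagonal.1 hpq
      rcases le_or_gt m p with h | hp
      · rw [hU p h, LinearMap.zero_apply, zero_lie]
      rcases le_or_gt m q with h | hq
      · rw [hU q h, LinearMap.zero_apply, lie_zero]
      obtain ⟨h1, h2⟩ : p = m - 1 ∧ q = m - 1 := by omega
      exact absurd (by rw [h1, h2]) hne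
  · -- part 2
    intro h4 k hk a
    classical
    have coeff_sum : ∀ (f : ℕ → Module.End F L) (q : ℕ), (∀ s, m ≤ s → f s = 0) →
        (∑ p ∈ Finset.range m, Polynomial.monomial p (f p)).coeff q = f q := by
      intro f q hf
      rw [Polynomial.finset_sum_coeff]
      rcases lt_or_ge q m with h | h
      · rw [Finset.sum_eq_single_of_mem q (Finset.mem_range.2 h)]
        · rw [Polynomial.coeff_monomial, if_pos rfl]
        · intro s _ hs
          rw [Polynomial.coeff_monomial, if_neg hs]
      · rw [hf q h]
        apply Finset.sum_eq_zero
        intro s hs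
        rw [Polynomial.coeff_monomial, if_neg (by have := Finset.mem_range.1 hs; omega)]
    obtain ⟨G, coeffG⟩ : ∃ G : Polynomial (Module.End F L), ∀ q, G.coeff q = Uop d q :=
      ⟨∑ q ∈ Finset.range m, Polynomial.monomial q (Uop d q),
        fun q => coeff_sum _ q (fun s hs => hU s hs)⟩
    obtain ⟨H, coeffH⟩ : ∃ H : Polynomial (Module.End F L),
        ∀ t, H.coeff t = ((-1 : ℤ) ^ t) • Uop d t :=
      ⟨∑ t ∈ Finset.range m, Polynomial.monomial t (((-1 : ℤ) ^ t) • Uop d t),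
        fun t => coeff_sum _ t (fun s hs => by rw [hU s hs, smul_zero])⟩
    obtain ⟨A, coeffA⟩ : ∃ A : L → Polynomial (Module.End F L),
        ∀ z p, (A z).coeff p = LieAlgebra.ad F L (Uop d p z) := by
      refine ⟨fun z => ∑ p ∈ Finset.range m,
        Polynomial.monomial p (LieAlgebra.ad F L (Uop d p z)), fun z p => ?_⟩
      refine coeff_sum _ p (fun s hs => ?_)
      rw [hU s hs]
      simp
    have degA : ∀ z, (A z).natDegree ≤ m - 1 := by
      intro z
      rw [Polynomial.natDegree_le_iff_coeff_eq_zero]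
      intro N hN
      rw [coeffA, hU N (by omega)]
      simp
    have hGH : G * H = 1 := by
      ext N
      rw [Polynomial.coeff_mul]
      have : ∀ pq ∈ Finset.HasAntidiagonal.antidiagonal N,
          G.coeff pq.1 * H.coeff pq.2 = ((-1 : ℤ) ^ pq.2) • (Uop d pq.1 * Uop d pq.2) := by
        intro pq _
        rw [coeffG, coeffH, mul_smul_comm]
      rw [Finset.sum_congr rfl this, hM2, Polynomial.coeff_one]
    have hAG : ∀ z : L, A z * G = G * Polynomial.C (LieAlgebra.ad F L z) := by
      intro z
      ext N : 1
      rw [Polynomial.coeff_mul, Polynomial.coeff_mul_C, coeffG]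
      have : ∀ pq ∈ Finset.HasAntidiagonal.antidiagonal N,
          (A z).coeff pq.1 * G.coeff pq.2
            = (LieAlgebra.ad F L (Uop d pq.1 z) : Module.End F L) * Uop d pq.2 := by
        intro pq _
        rw [coeffA, coeffG]
      rw [Finset.sum_congr rfl this]
      apply LinearMap.ext
      intro y
      have h1 := (hM1 N z y).symm
      simpa only [LinearMap.sum_apply, Module.End.mul_apply, LieAlgebra.ad_apply,
        LieHom.coe_toLinearMap] using h1
    have prodG : ∀ l : List L,
        ((l.map A).prod) * G
          = G * Polynomial.C ((l.map fun z => (LieAlgebra.ad F L z : Module.End F L)).prod) := by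
      intro l
      induction l with
      | nil => simp
      | cons z l ih =>
        rw [List.map_cons, List.prod_cons, List.map_cons, List.prod_cons,
          mul_assoc, ih, ← mul_assoc, hAG, mul_assoc, ← map_mul]
    have hPfact : (((List.ofFn fun j : Fin k => a j).map A).prod)
        = G * Polynomial.C (((List.ofFn fun j : Fin k => a j).map
            fun z => (LieAlgebra.ad F L z : Module.End F L)).prod) * H := by
      rw [← prodG, mul_assoc, hGH, mul_one]
    have hlen : ((List.ofFn fun j : Fin k => a j).map A).length = k := by simp
    have top : (((List.ofFn fun j : Fin k => a j).map A).prod).coeff (k * (m - 1))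
        = (List.ofFn fun j : Fin k => LieAlgebra.ad F L (Uop d (m - 1) (a j))).prod := by
      have h1 := Polynomial.coeff_list_prod_of_natDegree_le
        ((List.ofFn fun j : Fin k => a j).map A) (m - 1)
        (by intro p hp
            obtain ⟨z, -, rfl⟩ := List.mem_map.1 hp
            exact degA z)
      rw [hlen] at h1
      rw [h1, List.map_map, List.map_ofFn]
      refine congrArg List.prod (congrArg List.ofFn (funext fun j => ?_))
      simp only [Function.comp_apply]
      rw [coeffA]
    have bot : (((List.ofFn fun j : Fin k => a j).map A).prod).coeff (k * (m - 1)) = 0 := by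
      rw [hPfact, Polynomial.coeff_mul]
      apply Finset.sum_eq_zero
      rintro ⟨s, t⟩ hst
      have hst' : s + t = k * (m - 1) := Finset.HasAntidiagonal.mem_antidiagonal.1 hst
      have hK : 3 * (m - 1) ≤ k * (m - 1) := Nat.mul_le_mul_right _ (by omega)
      rcases le_or_gt m s with h | h
      · rw [Polynomial.coeff_mul_C, coeffG]
        simp only
        rw [hU s h, zero_mul, zero_mul]
      · have ht : m ≤ t := by omega
        simp only
        rw [coeffH, hU t ht, smul_zero, mul_zero]
    rw [← top, bot]
end

section
/- Let L be a Lie algebra over a field F and let Ω = {a_1, …, a_n} ⊆ L be a finite family of elements. Let Ω = Ω_1 ⊔ ⋯ ⊔ Ω_s and Ω = Ω'_1 ⊔ ⋯ ⊔ Ω'_t be two partitions of Ω. Set b_k = Σ_{a_i ∈ Ω_k} a_i and c_ℓ = Σ_{a_j ∈ Ω'_ℓ} a_j. Suppose that whenever a_i and a_j lie in the same block Ω_k or in the same block Ω'_ℓ (including the case i = j), one has ad(a_i) ∘ ad(a_j) = 0. Then Σ_{1≤k_1<k_2≤s} ad(b_{k_1}) ∘ ad(b_{k_2}) − Σ_{1≤ℓ_1<ℓ_2≤t}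 ad(c_{ℓ_1}) ∘ ad(c_{ℓ_2}) lies in the F-linear span of the operators ad(⁅a_i, a_j⁆), 1 ≤ i, j ≤ n. -/
lemma block_expand {F L : Type*} [Field F] [LieRing L] [LieAlgebra F L]
    {n s : ℕ} (a : Fin n → L) (f : Fin n → Fin s) :
    (∑ p ∈ Finset.univ.filter (fun p : Fin s × Fin s => p.1 < p.2),
        LieAlgebra.ad F L (∑ i ∈ Finset.univ.filter (fun i => f i = p.1), a i) *
          LieAlgebra.ad F L (∑ i ∈ Finset.univ.filter (fun i => f i = p.2), a i)) =
      ∑ p ∈ (Finset.univ : Finset (Fin n × Fin n)).filter (fun p => f p.1 < f p.2),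
        LieAlgebra.ad F L (a p.1) * LieAlgebra.ad F L (a p.2) := by
  have key := Finset.sum_fiberwise_eq_sum_filter
      (Finset.univ : Finset (Fin n × Fin n))
      (Finset.univ.filter (fun p : Fin s × Fin s => p.1 < p.2))
      (fun p => (f p.1, f p.2))
      (fun p => LieAlgebra.ad F L (a p.1) * LieAlgebra.ad F L (a p.2))
  have h2 : ∀ q : Fin s × Fin s,
      (∑ p ∈ Finset.univ.filter (fun p : Fin n × Fin n => (f p.1, f p.2) = q),
        LieAlgebra.ad F L (a p.1) * LieAlgebra.ad F L (a p.2)) =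
      LieAlgebra.ad F L (∑ i ∈ Finset.univ.filter (fun i => f i = q.1), a i) *
        LieAlgebra.ad F L (∑ i ∈ Finset.univ.filter (fun i => f i = q.2), a i) := by
    intro q
    have hsum : ∀ (u : Finset (Fin n)), LieAlgebra.ad F L (∑ i ∈ u, a i) =
        ∑ i ∈ u, LieAlgebra.ad F L (a i) :=
      fun u => map_sum (LieAlgebra.ad F L) a u
    rw [hsum, hsum, Finset.sum_mul_sum, ← Finset.sum_product']
    rw [← Finset.filter_product, ← Finset.univ_product_univ]
    apply Finset.sum_congr _ (fun _ _ => rfl)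
    congr 1
    ext p
    simp [Prod.ext_iff]
  calc (∑ p ∈ Finset.univ.filter (fun p : Fin s × Fin s => p.1 < p.2),
        LieAlgebra.ad F L (∑ i ∈ Finset.univ.filter (fun i => f i = p.1), a i) *
          LieAlgebra.ad F L (∑ i ∈ Finset.univ.filter (fun i => f i = p.2), a i))
      = ∑ q ∈ Finset.univ.filter (fun p : Fin s × Fin s => p.1 < p.2),
          ∑ p ∈ Finset.univ.filter (fun p : Fin n × Fin n => (f p.1, f p.2) = q),
            LieAlgebra.ad F L (a p.1) * LieAlgebra.ad F L (a p.2) := by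
        exact Finset.sum_congr rfl (fun q _ => (h2 q).symm)
    _ = _ := by
        rw [key]
        apply Finset.sum_congr _ (fun _ _ => rfl)
        congr 1
        ext p
        simp

lemma sym_sum_eq {M : Type*} [AddCommGroup M] {n s : ℕ} (f : Fin n → Fin s)
    (q : Fin n → Fin n → M) (hsym : ∀ i j, q i j = q j i)
    (hz : ∀ i j, f i = f j → q i j = 0) :
    (∑ p ∈ (Finset.univ : Finset (Fin n × Fin n)).filter (fun p => f p.1 < f p.2),
      q p.1 p.2) =
    ∑ p ∈ (Finset.univ : Finset (Fin n × Fin n)).filter (fun p => p.1 < p.2), q p.1 p.2 := by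
  classical
  -- split LHS by p.1 < p.2 vs p.2 < p.1 (p.1 = p.2 impossible)
  have split1 :
      (∑ p ∈ (Finset.univ : Finset (Fin n × Fin n)).filter (fun p => f p.1 < f p.2),
        q p.1 p.2) =
      (∑ p ∈ (Finset.univ : Finset (Fin n × Fin n)).filter
        (fun p => p.1 < p.2 ∧ f p.1 < f p.2), q p.1 p.2) +
      (∑ p ∈ (Finset.univ : Finset (Fin n × Fin n)).filter
        (fun p => p.2 < p.1 ∧ f p.1 < f p.2), q p.1 p.2) := by
    rw [← Finset.sum_filter_add_sum_filter_not
      ((Finset.univ : Finset (Fin n × Fin n)).filter (fun p => f p.1 < f p.2))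
      (fun p => p.1 < p.2), Finset.filter_filter, Finset.filter_filter]
    congr 2
    · ext p
      simp only [Finset.mem_filter, Finset.mem_univ, true_and, and_comm]
    · ext p
      simp only [Finset.mem_filter, Finset.mem_univ, true_and]
      constructor
      · rintro ⟨h1, h2⟩
        have hne : p.2 ≠ p.1 := fun c => lt_irrefl _ (by rw [c] at h1; exact h1)
        exact ⟨lt_of_le_of_ne (not_lt.mp h2) hne, h1⟩
      · rintro ⟨h1, h2⟩
        exact ⟨h2, not_lt.mpr h1.le⟩
  -- swap second sum
  have swap : (∑ p ∈ (Finset.univ : Finset (Fin n × Fin n)).filter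
        (fun p => p.2 < p.1 ∧ f p.1 < f p.2), q p.1 p.2) =
      ∑ p ∈ (Finset.univ : Finset (Fin n × Fin n)).filter
        (fun p => p.1 < p.2 ∧ f p.2 < f p.1), q p.1 p.2 := by
    apply Finset.sum_nbij' (fun p => Prod.swap p) (fun p => Prod.swap p)
    · intro p hp
      simp only [Finset.mem_filter, Finset.mem_univ, true_and, Prod.fst_swap,
        Prod.snd_swap] at hp ⊢
      exact hp
    · intro p hp
      simp only [Finset.mem_filter, Finset.mem_univ, true_and, Prod.fst_swap,
        Prod.snd_swap] at hp ⊢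
      exact hp
    · intro p _; simp
    · intro p _; simp
    · intro p _; exact hsym p.1 p.2
  -- RHS: drop equal-block pairs, then split
  have rhs1 : (∑ p ∈ (Finset.univ : Finset (Fin n × Fin n)).filter (fun p => p.1 < p.2),
      q p.1 p.2) =
      ∑ p ∈ ((Finset.univ : Finset (Fin n × Fin n)).filter
        (fun p => p.1 < p.2)).filter (fun p => f p.1 ≠ f p.2), q p.1 p.2 := by
    symm
    apply Finset.sum_subset (Finset.filter_subset _ _)
    intro p hp hnp
    simp only [Finset.mem_filter] at hp hnp
    exact hz p.1 p.2 (not_not.mp (fun hne => hnp ⟨hp, hne⟩))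
  have rhs2 : (∑ p ∈ ((Finset.univ : Finset (Fin n × Fin n)).filter
        (fun p => p.1 < p.2)).filter (fun p => f p.1 ≠ f p.2), q p.1 p.2) =
      (∑ p ∈ (Finset.univ : Finset (Fin n × Fin n)).filter
        (fun p => p.1 < p.2 ∧ f p.1 < f p.2), q p.1 p.2) +
      (∑ p ∈ (Finset.univ : Finset (Fin n × Fin n)).filter
        (fun p => p.1 < p.2 ∧ f p.2 < f p.1), q p.1 p.2) := by
    rw [← Finset.sum_filter_add_sum_filter_not
      (((Finset.univ : Finset (Fin n × Fin n)).filter (fun p => p.1 < p.2)).filter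
        (fun p => f p.1 ≠ f p.2))
      (fun p => f p.1 < f p.2), Finset.filter_filter, Finset.filter_filter,
      Finset.filter_filter, Finset.filter_filter]
    congr 2
    · ext p
      simp only [Finset.mem_filter, Finset.mem_univ, true_and]
      constructor
      · rintro ⟨h1, _, h3⟩; exact ⟨h1, h3⟩
      · rintro ⟨h1, h3⟩; exact ⟨h1, ne_of_lt h3, h3⟩
    · ext p
      simp only [Finset.mem_filter, Finset.mem_univ, true_and]
      constructor
      · rintro ⟨h1, h2, h3⟩
        exact ⟨h1, lt_of_le_of_ne (not_lt.mp h3) (Ne.symm h2)⟩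
      · rintro ⟨h1, h2⟩
        exact ⟨h1, h2.ne', not_lt.mpr h2.le⟩
  rw [split1, swap, rhs1, rhs2]

/-- Lemma 40: given two partitions (as block-assignment maps `f`, `g`) of a family
`a_1, …, a_n` in a Lie algebra such that `ad(a_i) ∘ ad(a_j) = 0` whenever `a_i, a_j` lie in
the same block of either partition, the difference of the two sums
`Σ_{k₁<k₂} ad(b_{k₁}) ∘ ad(b_{k₂})` and `Σ_{ℓ₁<ℓ₂} ad(c_{ℓ₁}) ∘ ad(c_{ℓ₂})` of block sums
lies in the span of the operators `ad(⁅a_i, a_j⁆)`. -/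
theorem partition_sum_difference_mem_span
    {F : Type*} {L : Type*} [Field F] [LieRing L] [LieAlgebra F L]
    {n s t : ℕ} (a : Fin n → L) (f : Fin n → Fin s) (g : Fin n → Fin t)
    (h : ∀ i j : Fin n, (f i = f j ∨ g i = g j) →
      LieAlgebra.ad F L (a i) * LieAlgebra.ad F L (a j) = 0) :
    (∑ p ∈ Finset.univ.filter (fun p : Fin s × Fin s => p.1 < p.2),
        LieAlgebra.ad F L (∑ i ∈ Finset.univ.filter (fun i => f i = p.1), a i) *
          LieAlgebra.ad F L (∑ i ∈ Finset.univ.filter (fun i => f i = p.2), a i)) -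
      (∑ p ∈ Finset.univ.filter (fun p : Fin t × Fin t => p.1 < p.2),
        LieAlgebra.ad F L (∑ i ∈ Finset.univ.filter (fun i => g i = p.1), a i) *
          LieAlgebra.ad F L (∑ i ∈ Finset.univ.filter (fun i => g i = p.2), a i)) ∈
      Submodule.span F
        { E : Module.End F L | ∃ i j : Fin n, E = LieAlgebra.ad F L ⁅a i, a j⁆ } := by
  set S := Submodule.span F
      { E : Module.End F L | ∃ i j : Fin n, E = LieAlgebra.ad F L ⁅a i, a j⁆ } with hS
  rw [block_expand a f, block_expand a g, ← Submodule.ker_mkQ S, LinearMap.mem_ker,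
    map_sub, map_sum, map_sum, sub_eq_zero]
  have key : ∀ i j : Fin n,
      S.mkQ (LieAlgebra.ad F L (a i) * LieAlgebra.ad F L (a j)) =
      S.mkQ (LieAlgebra.ad F L (a j) * LieAlgebra.ad F L (a i)) := by
    intro i j
    rw [Submodule.mkQ_apply, Submodule.mkQ_apply, Submodule.Quotient.eq]
    have hc : LieAlgebra.ad F L (a i) * LieAlgebra.ad F L (a j) -
        LieAlgebra.ad F L (a j) * LieAlgebra.ad F L (a i) =
        LieAlgebra.ad F L ⁅a i, a j⁆ := by
      ext z; simp only [LinearMap.sub_apply, Module.End.mul_apply, LieAlgebra.ad_apply]; rw [leibniz_lie]; abel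
    rw [hc]
    exact Submodule.subset_span ⟨i, j, rfl⟩
  have e1 := sym_sum_eq f
      (fun i j => S.mkQ (LieAlgebra.ad F L (a i) * LieAlgebra.ad F L (a j)))
      (fun i j => key i j)
      (fun i j hf => by rw [h i j (Or.inl hf), map_zero])
  have e2 := sym_sum_eq g
      (fun i j => S.mkQ (LieAlgebra.ad F L (a i) * LieAlgebra.ad F L (a j)))
      (fun i j => key i j)
      (fun i j hg => by rw [h i j (Or.inr hg), map_zero])
  exact e1.trans e2.symm
end

section
/- Let L be a Lie algebra over a field F, let n ≥ 3, and suppose there are scalars α_σ ∈ F indexed by the permutations σ of {1, …, n−1}, with α_id = 1, such that Σ_σ α_σ [x_0, x_{σ(1)}, …, x_{σ(n−1)}] = 0 (left-normed brackets) for all x_0, …, x_{n−1} ∈ L. Define f_1(a, b_2, …, b_{n−1}) = Σ_{σ : σ(1)=1} α_σ [a, b_{σ(2)}, …, b_{σ(n−1)}]. Then for arbitrary elements a, b_2, …, b_{n−1}, c ∈ L, the bracket ⁅f_1(a, b_2, …, b_{n−1}), c⁆ lies in the F-linear span of the elements [a, b_{i_2}, …, b_{i_{k−1}}, ⁅b_{i_k},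 c⁆, b_{i_{k+1}}, …, b_{i_{n−1}}], where (i_2, i_3, …, i_{n−1}) ranges over the permutations of (2, …, n−1) and 2 ≤ k ≤ n−1. -/
namespace L27

variable {L : Type*} [LieRing L]

lemma leftNormed_cons (x y : L) (l : List L) : leftNormed x (y :: l) = leftNormed ⁅x, y⁆ l := rfl

lemma leftNormed_nil (x : L) : leftNormed x [] = x := rfl

lemma head_mid (w u d : L) : ⁅w, ⁅u, d⁆⁆ = ⁅⁅w, u⁆, d⁆ - ⁅⁅w, d⁆, u⁆ := by
  rw [leibniz_lie w u d, ← lie_skew u ⁅w, d⁆]; abel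

lemma head_swap (w c d : L) : ⁅⁅w, c⁆, d⁆ = ⁅⁅w, d⁆, c⁆ - ⁅w, ⁅d, c⁆⁆ := by
  rw [leibniz_lie w d c, ← lie_skew ⁅w, c⁆ d]; abel

lemma leftNormed_append (x : L) (l₁ l₂ : List L) :
    leftNormed x (l₁ ++ l₂) = leftNormed (leftNormed x l₁) l₂ := by
  simp [leftNormed, List.foldl_append]

lemma leftNormed_neg (x : L) (l : List L) : leftNormed (-x) l = -leftNormed x l := by
  induction l generalizing x with
  | nil => rfl
  | cons y t ih => rw [leftNormed_cons, leftNormed_cons, neg_lie, ih]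

lemma leftNormed_sub (x y : L) (l : List L) :
    leftNormed (x - y) l = leftNormed x l - leftNormed y l := by
  induction l generalizing x y with
  | nil => rfl
  | cons z t ih => rw [leftNormed_cons, leftNormed_cons, leftNormed_cons, sub_lie, ih]

lemma leftNormed_middle_lie (a u d : L) (l₁ l₂ : List L) :
    leftNormed a (l₁ ++ ⁅u, d⁆ :: l₂)
      = leftNormed a (l₁ ++ u :: d :: l₂) - leftNormed a ((l₁ ++ [d]) ++ u :: l₂) := by
  simp only [leftNormed_append, leftNormed_cons, leftNormed_nil]
  set w := leftNormed a l₁ with hw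
  rw [← leftNormed_sub]
  exact congrArg (fun y => leftNormed y l₂) (head_mid w u d)

/-- The generators: `[a, l₁ ++ ⁅b,c⁆ :: l₂]` where `l₁ ++ b :: l₂` is a permutation of `B`. -/
def genSet (a c : L) (B : Multiset L) : Set L :=
  {z | ∃ l₁ l₂ : List L, ∃ b : L, ((l₁ ++ b :: l₂ : List L) : Multiset L) = B ∧
      z = leftNormed a (l₁ ++ ⁅b, c⁆ :: l₂)}

lemma claimB (F : Type*) [Field F] [LieAlgebra F L] (a c : L) (B : Multiset L) (s : List L) :
    ∀ b : L, ∀ l₁ l₂ : List L, ((l₁ ++ b :: (s ++ l₂) : List L) : Multiset L) = B →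
      leftNormed a (l₁ ++ (leftNormed ⁅b, c⁆ s) :: l₂) ∈ Submodule.span F (genSet a c B) := by
  induction s using List.reverseRecOn with
  | nil =>
      intro b l₁ l₂ h
      exact Submodule.subset_span ⟨l₁, l₂, b, by simpa using h, rfl⟩
  | append_singleton s d ih =>
      intro b l₁ l₂ h
      have hu : leftNormed ⁅b, c⁆ (s ++ [d]) = ⁅leftNormed ⁅b, c⁆ s, d⁆ := by
        rw [leftNormed_append]; rfl
      rw [hu, leftNormed_middle_lie]
      refine sub_mem (ih b l₁ (d :: l₂) ?_) (ih b (l₁ ++ [d]) l₂ ?_)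
      · simpa [List.append_assoc] using h
      · rw [← h]
        simp only [← Multiset.cons_coe, ← Multiset.coe_add, ← Multiset.singleton_add]
        abel

/-- Moving `c` from inside to the last position, modulo the span of the generators. -/
lemma lemA (F : Type*) [Field F] [LieAlgebra F L] (a c : L) (B : Multiset L) :
    ∀ l₂ l₁ : List L, ((l₁ ++ l₂ : List L) : Multiset L) = B →
      leftNormed a (l₁ ++ c :: l₂) - ⁅leftNormed a (l₁ ++ l₂), c⁆
        ∈ Submodule.span F (genSet a c B) := by
  intro l₂
  induction l₂ with
  | nil =>
      intro l₁ h
      have : leftNormed a (l₁ ++ [c]) = ⁅leftNormed a (l₁ ++ []), c⁆ := by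
        rw [leftNormed_append, List.append_nil]; rfl
      rw [this, sub_self]
      exact zero_mem _
  | cons d t ih =>
      intro l₁ h
      have key : leftNormed a (l₁ ++ c :: d :: t)
          = leftNormed a ((l₁ ++ [d]) ++ c :: t) - leftNormed a (l₁ ++ ⁅d, c⁆ :: t) := by
        simp only [leftNormed_append, leftNormed_cons, leftNormed_nil]
        set w := leftNormed a l₁ with hw
        rw [← leftNormed_sub]
        exact congrArg (fun y => leftNormed y t) (head_swap w c d)
      have hgen : leftNormed a (l₁ ++ ⁅d, c⁆ :: t) ∈ Submodule.span F (genSet a c B) :=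
        Submodule.subset_span ⟨l₁, t, d, h, rfl⟩
      have hih := ih (l₁ ++ [d]) (by simpa [List.append_assoc] using h)
      have hl : (l₁ ++ [d]) ++ t = l₁ ++ d :: t := by simp
      rw [key]
      have : leftNormed a ((l₁ ++ [d]) ++ c :: t) - leftNormed a (l₁ ++ ⁅d, c⁆ :: t)
          - ⁅leftNormed a (l₁ ++ d :: t), c⁆
          = (leftNormed a ((l₁ ++ [d]) ++ c :: t) - ⁅leftNormed a ((l₁ ++ [d]) ++ t), c⁆)
            - leftNormed a (l₁ ++ ⁅d, c⁆ :: t) := by rw [hl]; abel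
      rw [this]
      exact sub_mem hih hgen

/-- `⁅[a,l],c⁆ + [c, a::l]` is in the span. -/
lemma keyC0 (F : Type*) [Field F] [LieAlgebra F L] (a c : L) (B : Multiset L)
    (l : List L) (h : ((l : List L) : Multiset L) = B) :
    ⁅leftNormed a l, c⁆ + leftNormed c (a :: l) ∈ Submodule.span F (genSet a c B) := by
  have h1 : leftNormed c (a :: l) = -leftNormed a (c :: l) := by
    rw [leftNormed_cons, leftNormed_cons, ← lie_skew a c, leftNormed_neg, neg_neg]
  have h2 := lemA F a c B l [] (by simpa using h)
  simp only [List.nil_append] at h2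
  have h3 : ⁅leftNormed a l, c⁆ + leftNormed c (a :: l)
      = -(leftNormed a (c :: l) - ⁅leftNormed a l, c⁆) := by rw [h1]; abel
  rw [h3]
  exact neg_mem h2

/-- junk terms `[c, l₁ ++ a :: l₂]` with `l₁ ≠ []` are in the span. -/
lemma keyC (F : Type*) [Field F] [LieAlgebra F L] (a c : L) (B : Multiset L)
    (l₁ l₂ : List L) (h : ((l₁ ++ l₂ : List L) : Multiset L) = B) (h1 : l₁ ≠ []) :
    leftNormed c (l₁ ++ a :: l₂) ∈ Submodule.span F (genSet a c B) := by
  obtain ⟨b, s, rfl⟩ : ∃ b s, l₁ = b :: s := by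
    cases l₁ with
    | nil => exact absurd rfl h1
    | cons b s => exact ⟨b, s, rfl⟩
  have key : leftNormed c ((b :: s) ++ a :: l₂)
      = leftNormed a ((leftNormed ⁅b, c⁆ s) :: l₂) := by
    have e1 : leftNormed c ((b :: s) ++ a :: l₂)
        = leftNormed (leftNormed ⁅c, b⁆ s) (a :: l₂) := by
      rw [← leftNormed_cons, ← leftNormed_append]
    have e2 : leftNormed ⁅c, b⁆ s = -leftNormed ⁅b, c⁆ s := by
      rw [← lie_skew b c, leftNormed_neg, neg_neg]
    have e3 : ⁅leftNormed ⁅b, c⁆ s, a⁆ = -⁅a, leftNormed ⁅b, c⁆ s⁆ := by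
      rw [← lie_skew a (leftNormed ⁅b, c⁆ s), neg_neg]
    rw [e1, e2, leftNormed_cons, neg_lie, leftNormed_neg, e3, leftNormed_neg, neg_neg]
    rfl
  rw [key]
  simpa using claimB F a c B s b [] l₂ (by simpa using h)

/-- reconstruction: a list permutation-equivalent to `ofFn g` is `ofFn (g ∘ e)`. -/
lemma exists_comp_perm {α : Type*} : ∀ {m : ℕ} (g : Fin m → α) (l : List α),
    l.Perm (List.ofFn g) → ∃ e : Equiv.Perm (Fin m), l = List.ofFn (g ∘ e) := by
  intro m
  induction m with
  | zero =>
      intro g l h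
      refine ⟨1, ?_⟩
      simpa [List.ofFn_zero] using h
  | succ m ih =>
      intro g l h
      have hlen : l.length = m + 1 := by simpa using h.length_eq
      obtain ⟨hd, t, rfl⟩ : ∃ hd t, l = hd :: t := by
        cases l with
        | nil => simp at hlen
        | cons hd t => exact ⟨hd, t, rfl⟩
      have hmem : hd ∈ List.ofFn g := h.mem_iff.mp List.mem_cons_self
      obtain ⟨j, hj⟩ := List.mem_ofFn.mp hmem
      set σ₀ : Equiv.Perm (Fin (m+1)) := Equiv.Perm.decomposeFin.symm (j, 1) with hσ₀
      have h1 : List.ofFn (g ∘ σ₀) = hd :: List.ofFn (fun i => g (σ₀ i.succ)) := by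
        rw [List.ofFn_succ]
        simp [σ₀, ← hj]
      have h2 : (hd :: t).Perm (List.ofFn (g ∘ σ₀)) :=
        h.trans (σ₀.ofFn_comp_perm g).symm
      rw [h1] at h2
      have h3 := (List.perm_cons hd).mp h2
      obtain ⟨e', he'⟩ := ih (fun i => g (σ₀ i.succ)) t h3
      refine ⟨σ₀ * Equiv.Perm.decomposeFin.symm (0, e'), ?_⟩
      rw [List.ofFn_succ]
      have hhd : (g ∘ ⇑(σ₀ * Equiv.Perm.decomposeFin.symm (0, e'))) 0 = hd := by
        simp only [Function.comp_apply, Equiv.Perm.coe_mul,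
          Equiv.Perm.decomposeFin_symm_apply_zero]
        rw [hσ₀, Equiv.Perm.decomposeFin_symm_apply_zero, hj]
      have htl : (fun i : Fin m => (g ∘ ⇑(σ₀ * Equiv.Perm.decomposeFin.symm (0, e'))) i.succ)
          = (fun i => g (σ₀ i.succ)) ∘ ⇑e' := by
        funext i
        simp only [Function.comp_apply, Equiv.Perm.coe_mul,
          Equiv.Perm.decomposeFin_symm_apply_succ, Equiv.Perm.coe_one, Equiv.swap_self,
          Equiv.refl_apply]
      rw [hhd, htl, ← he']

lemma append_cons_eq_ofFn_ite {α : Type*} {m : ℕ} (f : Fin m → α) (l₁ l₂ : List α) (b : α)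
    (h : l₁ ++ b :: l₂ = List.ofFn f) (hk : l₁.length < m) :
    b = f ⟨l₁.length, hk⟩ ∧
    ∀ v : α, l₁ ++ v :: l₂
      = List.ofFn (fun j => if j = (⟨l₁.length, hk⟩ : Fin m) then v else f j) := by
  have hlen : l₁.length + l₂.length + 1 = m := by
    have := congrArg List.length h
    simp at this
    omega
  have hof : ∀ (i : ℕ) (hi : i < m), f ⟨i, hi⟩ = (l₁ ++ b :: l₂)[i]'(by simp; omega) := by
    intro i hi
    have := List.getElem_of_eq h.symm (by simpa using hi)
    rw [← this, List.getElem_ofFn]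
  have hb : b = f ⟨l₁.length, hk⟩ := by
    rw [hof l₁.length hk, List.getElem_append_right (le_refl _)]
    simp
  refine ⟨hb, fun v => ?_⟩
  apply List.ext_getElem
  · simp; omega
  · intro i h1 h2
    have hi : i < m := by simpa using h2
    rw [List.getElem_ofFn]
    rcases lt_trichotomy i l₁.length with hlt | heq | hgt
    · rw [List.getElem_append_left hlt]
      rw [if_neg (by simp [Fin.ext_iff]; omega)]
      rw [hof i hi, List.getElem_append_left hlt]
    · subst heq
      rw [List.getElem_append_right (le_refl _)]
      simp
    · rw [List.getElem_append_right (le_of_lt hgt)]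
      rw [if_neg (by simp [Fin.ext_iff]; omega)]
      rw [hof i hi, List.getElem_append_right (le_of_lt hgt)]
      rw [List.getElem_cons, List.getElem_cons]
      simp [show ¬ i - l₁.length = 0 by omega]

lemma filter_sum_mem {ι M F : Type*} [Fintype ι] [AddCommGroup M] [Field F] [Module F M]
    (P : Submodule F M) (p : ι → Prop) [DecidablePred p]
    (f g : ι → M) (h0 : ∑ i, g i = 0)
    (h1 : ∀ i, p i → f i + g i ∈ P) (h2 : ∀ i, ¬ p i → g i ∈ P) :
    ∑ i ∈ Finset.univ.filter p, f i ∈ P := by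
  have hs : ∑ i ∈ Finset.univ.filter p, f i
      = ∑ i ∈ Finset.univ.filter p, (f i + g i)
        + ∑ i ∈ Finset.univ.filter (fun i => ¬ p i), g i := by
    rw [Finset.sum_add_distrib]
    have h3 := Finset.sum_filter_add_sum_filter_not Finset.univ p g
    rw [add_assoc, h3, h0, add_zero]
  rw [hs]
  exact add_mem
    (Submodule.sum_mem _ fun i hi => h1 i (Finset.mem_filter.mp hi).2)
    (Submodule.sum_mem _ fun i hi => h2 i (Finset.mem_filter.mp hi).2)

end L27

namespace L27

lemma lie_sum_left {L : Type*} [LieRing L] {ι : Type*} (s : Finset ι) (f : ι → L) (c : L) :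
    ⁅∑ i ∈ s, f i, c⁆ = ∑ i ∈ s, ⁅f i, c⁆ := by
  induction s using Finset.cons_induction with
  | empty => simp
  | cons a s ha ih => simp [Finset.sum_cons, add_lie, ih]

end L27

/-- Lemma 27: if `L` satisfies a multilinear identity of degree `n` with coefficient `1` at
the identity permutation, and `f₁` is the partial sum over permutations fixing the first
variable, then `⁅f₁(a, b₂, …, b_{n-1}), c⁆` lies in the span of the left-normed commutators
`[a, b_{i₂}, …, ⁅b_{i_k}, c⁆, …, b_{i_{n-1}}]`. -/
theorem bracket_f1_mem_span
    {F : Type*} {L : Type*} [Field F] [LieRing L] [LieAlgebra F L]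
    (n : ℕ) (hn : 3 ≤ n) (α : Equiv.Perm (Fin (n - 1)) → F) (hα : α 1 = 1)
    (hid : ∀ (x0 : L) (x : Fin (n - 1) → L),
      ∑ σ : Equiv.Perm (Fin (n - 1)),
        α σ • leftNormed x0 (List.ofFn fun i => x (σ i)) = 0)
    (a : L) (x : Fin (n - 1) → L) (c : L) :
    ⁅∑ σ ∈ Finset.univ.filter
        (fun σ : Equiv.Perm (Fin (n - 1)) => σ ⟨0, by omega⟩ = ⟨0, by omega⟩),
      α σ • leftNormed a (List.ofFn fun i => x (σ i)).tail, c⁆ ∈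
      Submodule.span F
        { z : L | ∃ τ : Equiv.Perm (Fin (n - 1)), τ ⟨0, by omega⟩ = ⟨0, by omega⟩ ∧
          ∃ k : Fin (n - 1), k ≠ ⟨0, by omega⟩ ∧
            z = leftNormed a
              (List.ofFn fun i => if i = k then ⁅x (τ i), c⁆ else x (τ i)).tail } := by
  obtain ⟨m, rfl⟩ : ∃ m, n = m + 3 := ⟨n - 3, by omega⟩

  set z : Fin (m + 2) → L := fun i => if i = 0 then a else x i with hzdef
  set B : Multiset L := ((List.ofFn fun i : Fin (m + 1) => x i.succ : List L) : Multiset L)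
    with hBdef
  -- (1) span of genSet is inside the target span
  have hsub : Submodule.span F (L27.genSet a c B) ≤
      Submodule.span F
        { w : L | ∃ τ : Equiv.Perm (Fin (m + 2)), τ 0 = 0 ∧
          ∃ k : Fin (m + 2), k ≠ 0 ∧
            w = leftNormed a
              (List.ofFn fun i => if i = k then ⁅x (τ i), c⁆ else x (τ i)).tail } := by
    rw [Submodule.span_le]
    rintro w ⟨l₁, l₂, b, hB, rfl⟩
    apply Submodule.subset_span
    have hperm : (l₁ ++ b :: l₂).Perm (List.ofFn fun i : Fin (m + 1) => x i.succ) :=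
      Multiset.coe_eq_coe.mp hB
    obtain ⟨e, he⟩ := L27.exists_comp_perm _ _ hperm
    have hk : l₁.length < m + 1 := by
      have hlen := congrArg List.length he
      simp at hlen
      omega
    obtain ⟨hb, hup⟩ := L27.append_cons_eq_ofFn_ite _ l₁ l₂ b he hk
    refine ⟨Equiv.Perm.decomposeFin.symm (0, e),
      Equiv.Perm.decomposeFin_symm_apply_zero 0 e,
      (⟨l₁.length, hk⟩ : Fin (m + 1)).succ, Fin.succ_ne_zero _, ?_⟩
    have hτs : ∀ j : Fin (m + 1),
        (Equiv.Perm.decomposeFin.symm (0, e) : Equiv.Perm (Fin (m + 2))) j.succ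
          = (e j).succ := by
      intro j
      rw [Equiv.Perm.decomposeFin_symm_apply_succ]
      simp
    have hl : l₁ ++ ⁅b, c⁆ :: l₂
        = (List.ofFn fun i : Fin (m + 2) =>
            if i = (⟨l₁.length, hk⟩ : Fin (m + 1)).succ
            then ⁅x ((Equiv.Perm.decomposeFin.symm (0, e) : Equiv.Perm (Fin (m + 2))) i), c⁆
            else x ((Equiv.Perm.decomposeFin.symm (0, e) : Equiv.Perm (Fin (m + 2))) i)).tail := by
      rw [List.ofFn_succ, List.tail_cons, hup ⁅b, c⁆]
      congr 1
      funext j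
      simp only [hτs]
      by_cases hj : j = (⟨l₁.length, hk⟩ : Fin (m + 1))
      · subst hj
        rw [if_pos rfl, if_pos rfl, hb]
        rfl
      · have hj2 : ¬ (j.succ = (⟨l₁.length, hk⟩ : Fin (m + 1)).succ) :=
          fun hc => hj (Fin.succ_injective _ hc)
        rw [if_neg hj, if_neg hj2]
        rfl
    rw [hl]
  -- common facts
  have hofz : List.ofFn z = a :: List.ofFn (fun i : Fin (m + 1) => x i.succ) := by
    rw [List.ofFn_succ]
    have h1 : z 0 = a := by simp [hzdef]
    have h2 : (fun i : Fin (m + 1) => z i.succ) = fun i : Fin (m + 1) => x i.succ := by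
      funext i
      simp [hzdef, Fin.succ_ne_zero]
    rw [h1, h2]
  have hmulσ : ∀ σ : Equiv.Perm (Fin (m + 2)),
      ((List.ofFn fun i => z (σ i) : List L) : Multiset L)
        = ((List.ofFn z : List L) : Multiset L) := by
    intro σ
    exact Multiset.coe_eq_coe.mpr (by simpa [Function.comp] using σ.ofFn_comp_perm z)
  -- (2) key1: terms with σ 0 = 0
  have key1 : ∀ σ : Equiv.Perm (Fin (m + 2)), σ 0 = 0 →
      ⁅leftNormed a (List.ofFn fun i => x (σ i)).tail, c⁆
        + leftNormed c (List.ofFn fun i => z (σ i)) ∈ Submodule.span F (L27.genSet a c B) := by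
    intro σ hσ
    have hz0 : (List.ofFn fun i : Fin (m + 2) => z (σ i))
        = a :: List.ofFn (fun i : Fin (m + 1) => z (σ i.succ)) := by
      rw [List.ofFn_succ]
      congr 1
      simp [hσ, hzdef]
    have ht : (List.ofFn fun i : Fin (m + 2) => x (σ i)).tail
        = List.ofFn (fun i : Fin (m + 1) => z (σ i.succ)) := by
      rw [List.ofFn_succ, List.tail_cons]
      congr 1
      funext i
      have hne : σ i.succ ≠ 0 := by
        intro hc
        exact Fin.succ_ne_zero i (σ.injective (hc.trans hσ.symm))
      simp [hzdef, hne]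
    have hmul : ((List.ofFn fun i : Fin (m + 1) => z (σ i.succ) : List L) : Multiset L) = B := by
      have p1 := hmulσ σ
      rw [hz0, hofz] at p1
      simp only [← Multiset.cons_coe] at p1
      exact (Multiset.cons_inj_right a).mp p1
    rw [ht, hz0]
    exact L27.keyC0 F a c B _ hmul
  -- (3) key2: terms with σ 0 ≠ 0
  have key2 : ∀ σ : Equiv.Perm (Fin (m + 2)), ¬ (σ 0 = 0) →
      leftNormed c (List.ofFn fun i => z (σ i)) ∈ Submodule.span F (L27.genSet a c B) := by
    intro σ hσ
    have hps : σ (σ⁻¹ 0) = 0 := σ.apply_symm_apply 0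
    have hp0 : ((σ⁻¹ 0 : Fin (m + 2)) : ℕ) ≠ 0 := by
      intro hc
      apply hσ
      have h4 : (σ⁻¹ 0 : Fin (m + 2)) = 0 := Fin.ext hc
      nth_rewrite 1 [← h4]
      exact hps
    set l : List L := List.ofFn fun i => z (σ i) with hldef
    have hlL : l.length = m + 2 := by simp [hldef]
    have hplt : ((σ⁻¹ 0 : Fin (m + 2)) : ℕ) < l.length := by
      rw [hlL]; exact (σ⁻¹ 0).isLt
    have hgete : l[((σ⁻¹ 0 : Fin (m + 2)) : ℕ)]'hplt = a := by
      simp only [hldef, List.getElem_ofFn, Fin.eta, hps]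
      simp [hzdef]
    have hsplit : l = l.take ((σ⁻¹ 0 : Fin (m + 2)) : ℕ)
        ++ a :: l.drop (((σ⁻¹ 0 : Fin (m + 2)) : ℕ) + 1) := by
      conv_lhs => rw [← List.take_append_drop ((σ⁻¹ 0 : Fin (m + 2)) : ℕ) l]
      congr 1
      rw [List.drop_eq_getElem_cons hplt, hgete]
    have hm1 : ((l.take ((σ⁻¹ 0 : Fin (m + 2)) : ℕ)
        ++ l.drop (((σ⁻¹ 0 : Fin (m + 2)) : ℕ) + 1) : List L) : Multiset L) = B := by
      have p1 : (l : Multiset L) = a ::ₘ B := by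
        calc (l : Multiset L) = ((List.ofFn z : List L) : Multiset L) := hmulσ σ
          _ = a ::ₘ B := by rw [hofz, ← Multiset.cons_coe]
      have p2 : (l : Multiset L) = a ::ₘ ((l.take ((σ⁻¹ 0 : Fin (m + 2)) : ℕ)
          ++ l.drop (((σ⁻¹ 0 : Fin (m + 2)) : ℕ) + 1) : List L) : Multiset L) := by
        conv_lhs => rw [hsplit]
        simp only [← Multiset.cons_coe, ← Multiset.coe_add, ← Multiset.singleton_add]
        abel
      rw [p2] at p1
      exact (Multiset.cons_inj_right a).mp p1
    have htne : l.take ((σ⁻¹ 0 : Fin (m + 2)) : ℕ) ≠ [] := by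
      intro hc
      have h5 := congrArg List.length hc
      rw [List.length_take, hlL] at h5
      simp only [List.length_nil] at h5
      have h6 : min ((σ⁻¹ 0 : Fin (m + 2)) : ℕ) (m + 2)
          = ((σ⁻¹ 0 : Fin (m + 2)) : ℕ) :=
        Nat.min_eq_left (le_of_lt (σ⁻¹ 0).isLt)
      rw [h6] at h5
      exact hp0 h5
    have hmem := L27.keyC F a c B _ _ hm1 htne
    rw [hsplit]
    exact hmem
  -- (4) assemble
  rw [L27.lie_sum_left]
  simp only [smul_lie]
  refine L27.filter_sum_mem _ _ _
    (fun σ => α σ • leftNormed c (List.ofFn fun i => z (σ i))) (hid c z) ?_ ?_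
  · intro σ hσ
    rw [← smul_add]
    exact Submodule.smul_mem _ _ (hsub (key1 σ hσ))
  · intro σ hσ
    exact Submodule.smul_mem _ _ (hsub (key2 σ hσ))
end
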